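/- arXiv:1201.5995 — 8 statements merged into one kernel-verified Lean document; each statement's English description precedes it below -/
import Mathlib

section
/- For n ≥ 3, the reduction map R_n is not extremal in the cone of positive maps: there exists a positive map Λ not proportional to R_n such that R_n − Λ is still a positive map. -/
open scoped ComplexOrder

/-- The reduction map `R_n(X) = (Tr X) • I - X` as a linear map. -/
noncomputable def Rlin (n : ℕ) :
    Matrix (Fin n) (Fin n) ℂ →ₗ[ℂ] Matrix (Fin n) (Fin n) ℂ where
  toFun X := X.trace • (1 : Matrix (Fin n) (Fin n) ℂ) - X
  map_add' X Y := by simp [Matrix.trace_add, add_smul]; abel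
  map_smul' c X := by simp [Matrix.trace_smul, smul_smul, smul_sub]

open Matrix

set_option linter.unusedSectionVars false

variable {m : Type*} [Fintype m] [DecidableEq m]

lemma conjT_std (i j : m) :
    (Matrix.single i j (1:ℂ))ᴴ = Matrix.single j i 1 := by
  ext a b
  simp [conjTranspose_apply, Matrix.single, and_comm]

lemma std_mul_std (Y : Matrix m m ℂ) (a b c d : m) :
    Matrix.single a b (1:ℂ) * Y * Matrix.single c d 1 = Y b c • Matrix.single a d 1 := by
  ext x y
  simp only [mul_apply, Matrix.single, of_apply, Matrix.smul_apply, ite_and, boole_mul, mul_boole,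
    ite_mul, zero_mul, smul_ite, smul_zero, smul_eq_mul, mul_one]
  simp [Finset.sum_ite_eq, Finset.sum_ite_eq']
  by_cases hx : a = x <;> by_cases hy : d = y <;> simp [hx, hy, mul_comm]

/-- single-pair conjugation term -/
lemma term_eq (Y : Matrix m m ℂ) (i j : m) :
    (Matrix.single i j (1:ℂ) - Matrix.single j i 1) * Y *
      (Matrix.single i j (1:ℂ) - Matrix.single j i 1)ᴴ
    = Y j j • Matrix.single i i 1 + Y i i • Matrix.single j j 1
      - Y j i • Matrix.single i j 1 - Y i j • Matrix.single j i 1 := by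
  rw [conjTranspose_sub, conjT_std, conjT_std]
  simp only [sub_mul, mul_sub, std_mul_std]
  abel

lemma sum_diag_std (m : Type*) [Fintype m] [DecidableEq m] :
    ∑ i : m, Matrix.single i i (1:ℂ) = 1 := by
  ext a b
  simp only [Matrix.single, Matrix.sum_apply, of_apply, one_apply, ite_and]
  by_cases h : a = b <;> simp [h, Finset.sum_ite_eq]

lemma sum_identity (Y : Matrix m m ℂ) :
    ∑ p : m × m, ((Matrix.single p.1 p.2 (1:ℂ) - Matrix.single p.2 p.1 1) * Y *
      (Matrix.single p.1 p.2 (1:ℂ) - Matrix.single p.2 p.1 1)ᴴ)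
    = (2:ℂ) • (Y.trace • 1 - Yᵀ) := by
  simp only [term_eq]
  rw [Fintype.sum_prod_type]
  simp only [Finset.sum_sub_distrib, Finset.sum_add_distrib]
  have h1 : ∑ i : m, ∑ j : m, Y j j • Matrix.single i i (1:ℂ) = Y.trace • 1 := by
    rw [← sum_diag_std m, Finset.smul_sum]
    refine Finset.sum_congr rfl fun i _ => ?_
    rw [← Finset.sum_smul]
    rfl
  have h2 : ∑ i : m, ∑ j : m, Y i i • Matrix.single j j (1:ℂ) = Y.trace • 1 := by
    simp only [← Finset.smul_sum, sum_diag_std]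
    rw [← Finset.sum_smul]
    rfl
  have h3 : ∑ i : m, ∑ j : m, Y j i • Matrix.single i j (1:ℂ) = Yᵀ := by
    conv_rhs => rw [matrix_eq_sum_single Yᵀ]
    simp [smul_single, transpose_apply]
  have h4 : ∑ i : m, ∑ j : m, Y i j • Matrix.single j i (1:ℂ) = Yᵀ := by
    rw [Finset.sum_comm]
    conv_rhs => rw [matrix_eq_sum_single Yᵀ]
    simp [smul_single, transpose_apply]
  rw [h1, h2, h3, h4]
  module

lemma psd_of_two_smul {M : Matrix m m ℂ} (h : ((2:ℂ) • M).PosSemidef) : M.PosSemidef := by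
  have h2 := h.mul_mul_conjTranspose_same ((((Real.sqrt 2)⁻¹ : ℝ) : ℂ) • (1 : Matrix m m ℂ))
  have hs : ((Real.sqrt 2:ℝ):ℂ) * ((Real.sqrt 2:ℝ):ℂ) = 2 := by
    rw [← Complex.ofReal_mul, Real.mul_self_sqrt (by norm_num)]
    norm_num
  have hr : ((Real.sqrt 2:ℝ):ℂ)⁻¹ * (2 * ((Real.sqrt 2:ℝ):ℂ)⁻¹) = 1 := by
    have hne : ((Real.sqrt 2:ℝ):ℂ) ≠ 0 := by
      intro h0
      rw [h0] at hs
      norm_num at hs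
    calc ((Real.sqrt 2:ℝ):ℂ)⁻¹ * (2 * ((Real.sqrt 2:ℝ):ℂ)⁻¹)
        = 2 * (((Real.sqrt 2:ℝ):ℂ)⁻¹ * ((Real.sqrt 2:ℝ):ℂ)⁻¹) := by ring
      _ = 2 * (((Real.sqrt 2:ℝ):ℂ) * ((Real.sqrt 2:ℝ):ℂ))⁻¹ := by rw [mul_inv]
      _ = 1 := by rw [hs]; norm_num
  simpa [Matrix.smul_mul, Matrix.mul_smul, smul_smul, conjTranspose_smul, hr] using h2


/-- For `n ≥ 3` the reduction map is not extremal in the cone of positive maps: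
there is a positive map `Λ`, not proportional to `R_n`, with `R_n - Λ` positive. -/
theorem reduction_map_not_extremal (n : ℕ) (hn : 3 ≤ n) :
    ∃ Λ : Matrix (Fin n) (Fin n) ℂ →ₗ[ℂ] Matrix (Fin n) (Fin n) ℂ,
      (∀ X, X.PosSemidef → (Λ X).PosSemidef) ∧
      (∀ X, X.PosSemidef → (Rlin n X - Λ X).PosSemidef) ∧
      ¬ (∃ c : ℂ, Λ = c • Rlin n) := by
  have h0 : 0 < n := by omega
  have h1 : 1 < n := by omega
  have h2 : 2 < n := by omega
  set i0 : Fin n := ⟨0, h0⟩ with hi0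
  set i1 : Fin n := ⟨1, h1⟩ with hi1
  set i2 : Fin n := ⟨2, h2⟩ with hi2
  have h01 : i0 ≠ i1 := by simp [hi0, hi1, Fin.ext_iff]
  have h21 : i2 ≠ i1 := by simp [hi2, hi1, Fin.ext_iff]
  have h20 : i2 ≠ i0 := by simp [hi2, hi0, Fin.ext_iff]
  set V : Matrix (Fin n) (Fin n) ℂ :=
    Matrix.single i0 i1 1 - Matrix.single i1 i0 1 with hVdef
  refine ⟨{ toFun := fun X => V * Xᵀ * Vᴴ,
            map_add' := fun X Y => by
              simp [Matrix.transpose_add, Matrix.mul_add, Matrix.add_mul],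
            map_smul' := fun c X => by
              simp [Matrix.transpose_smul, Matrix.smul_mul, Matrix.mul_smul] },
      fun X hX => hX.transpose.mul_mul_conjTranspose_same V, ?_, ?_⟩
  · -- R - Λ positive
    intro X hX
    apply psd_of_two_smul
    set f : Fin n × Fin n → Matrix (Fin n) (Fin n) ℂ := fun p =>
      (Matrix.single p.1 p.2 (1:ℂ) - Matrix.single p.2 p.1 1) * Xᵀ *
        (Matrix.single p.1 p.2 (1:ℂ) - Matrix.single p.2 p.1 1)ᴴ with hf
    have hsum : ∑ p : Fin n × Fin n, f p = (2:ℂ) • (Rlin n X) := by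
      rw [hf, sum_identity Xᵀ]
      simp [Rlin, Matrix.trace_transpose]
    have hf01 : f (i0, i1) = V * Xᵀ * Vᴴ := rfl
    have hf10 : f (i1, i0) = V * Xᵀ * Vᴴ := by
      show (Matrix.single i1 i0 (1:ℂ) - Matrix.single i0 i1 1) * Xᵀ *
        (Matrix.single i1 i0 (1:ℂ) - Matrix.single i0 i1 1)ᴴ = _
      have : Matrix.single i1 i0 (1:ℂ) - Matrix.single i0 i1 1 = -V := by
        rw [hVdef]; abel
      rw [this]
      simp
    have hne : (i1, i0) ≠ (i0, i1) := fun h => h01 (congrArg Prod.fst h).symm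
    have hmem1 : (i1, i0) ∈ (Finset.univ : Finset (Fin n × Fin n)).erase (i0, i1) :=
      Finset.mem_erase.mpr ⟨hne, Finset.mem_univ _⟩
    have key : (2:ℂ) • (Rlin n X - V * Xᵀ * Vᴴ)
        = ∑ p ∈ ((Finset.univ : Finset (Fin n × Fin n)).erase (i0, i1)).erase (i1, i0), f p := by
      rw [Finset.sum_erase_eq_sub hmem1,
        Finset.sum_erase_eq_sub (Finset.mem_univ (i0, i1)), hsum, hf01, hf10]
      module
    show ((2:ℂ) • (Rlin n X - V * Xᵀ * Vᴴ)).PosSemidef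
    rw [key]
    refine Finset.sum_induction f _ (fun a b ha hb => ha.add hb) Matrix.PosSemidef.zero
      (fun p _ => hX.transpose.mul_mul_conjTranspose_same _)
  · -- not proportional
    rintro ⟨c, hc⟩
    have happ : ∀ X : Matrix (Fin n) (Fin n) ℂ, V * Xᵀ * Vᴴ = c • (X.trace • 1 - X) := by
      intro X
      have := congrArg (fun Φ => Φ X) hc
      simpa [Rlin] using this
    have htp : ∀ i : Fin n, (Matrix.single i i (1:ℂ))ᵀ = Matrix.single i i 1 := by
      intro i
      ext a b
      simp [Matrix.single, and_comm]
    have htr : ∀ i : Fin n, (Matrix.single i i (1:ℂ)).trace = 1 := by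
      intro i
      simp [Matrix.trace, Matrix.diag, Matrix.single, Finset.sum_ite_eq]
    -- evaluate at E i2 i2, entry (i0, i0): get c = 0
    have e1 := congrFun (congrFun (happ (Matrix.single i2 i2 1)) i0) i0
    rw [htp] at e1
    rw [hVdef, term_eq] at e1
    simp [Matrix.single_apply_of_ne, h21, h20, htr, h20.symm,
      Matrix.one_apply, Matrix.smul_apply] at e1
    -- e1 : 0 = c
    have e2 := congrFun (congrFun (happ (Matrix.single i1 i1 1)) i0) i0
    rw [htp] at e2
    rw [hVdef, term_eq] at e2
    simp [Matrix.single_apply_of_ne, h01, h01.symm, htr, ← e1,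
      Matrix.one_apply, Matrix.smul_apply] at e2
end

section
/- The map Φ_n on M_{2n}(ℂ) defined blockwise by Φ_n([[X11,X12],[X21,X22]]) = (1/n)·[[I_n·Tr X22, −X12 − R_n(X21)],[−X21 − R_n(X12), I_n·Tr X11]] is a positive map: it sends positive semidefinite matrices to positive semidefinite matrices. -/
open scoped ComplexOrder

/-- The reduction map `R_n(X) = (Tr X) • I - X` on `n × n` complex matrices. -/
noncomputable def Rmap (n : ℕ) (X : Matrix (Fin n) (Fin n) ℂ) :
    Matrix (Fin n) (Fin n) ℂ :=
  X.trace • (1 : Matrix (Fin n) (Fin n) ℂ) - X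

/-- The map `Φ_n` on `2n × 2n` complex matrices, written in block form. -/
noncomputable def Phi (n : ℕ)
    (X : Matrix (Fin n ⊕ Fin n) (Fin n ⊕ Fin n) ℂ) :
    Matrix (Fin n ⊕ Fin n) (Fin n ⊕ Fin n) ℂ :=
  ((n : ℂ)⁻¹) • Matrix.fromBlocks
    (X.toBlocks₂₂.trace • (1 : Matrix (Fin n) (Fin n) ℂ))
    (-(X.toBlocks₁₂) - Rmap n X.toBlocks₂₁)
    (-(X.toBlocks₂₁) - Rmap n X.toBlocks₁₂)
    (X.toBlocks₁₁.trace • (1 : Matrix (Fin n) (Fin n) ℂ))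

section Aux

open Matrix


lemma normsqC (z : ℂ) : ‖z‖^2 = z.re^2 + z.im^2 := by
  rw [Complex.sq_norm, Complex.normSq_apply]; ring

lemma realCore (A B V pr pi qr qi rr ri : ℝ) (hA : 0 < A)
    (hCS : A^2 * ((A*rr - (pr*qr+pi*qi))^2 + (A*ri - (pr*qi - pi*qr))^2)
      ≤ (A*(A*B - (pr^2+pi^2))) * (A*(A*V - (qr^2+qi^2)))) :
    (pr^2+pi^2)*V + A*(rr^2+ri^2) + B*(qr^2+qi^2)
      - 2*(pr*(qr*rr+qi*ri) + pi*(qi*rr - qr*ri)) ≤ A*B*V := by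
  have h1 : A^3*(A*B*V - ((pr^2+pi^2)*V + A*(rr^2+ri^2) + B*(qr^2+qi^2)
      - 2*(pr*(qr*rr+qi*ri) + pi*(qi*rr - qr*ri))))
      = (A*(A*B - (pr^2+pi^2))) * (A*(A*V - (qr^2+qi^2)))
        - A^2 * ((A*rr - (pr*qr+pi*qi))^2 + (A*ri - (pr*qi - pi*qr))^2) := by ring
  nlinarith [hCS, h1, mul_pos (mul_pos hA hA) hA]

variable {E : Type*} [NormedAddCommGroup E] [InnerProductSpace ℂ E]
local notation "⟪" x ", " y "⟫" => @inner ℂ _ _ x y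

lemma lemB (a b v : E) :
    ‖(⟪a, b⟫ : ℂ) • v + (⟪b, v⟫ : ℂ) • a - (⟪a, v⟫ : ℂ) • b‖ ≤ ‖a‖ * ‖b‖ * ‖v‖ := by
  by_cases ha : a = 0
  · simp [ha]
  have hA : (0:ℝ) < ‖a‖ ^ 2 := by
    have : 0 < ‖a‖ := norm_pos_iff.mpr ha
    positivity
  set p : ℂ := ⟪a, b⟫ with hp
  set q : ℂ := ⟪a, v⟫ with hq
  set r : ℂ := ⟪b, v⟫ with hr
  set A : ℝ := ‖a‖ ^ 2 with hAdef
  set B : ℝ := ‖b‖ ^ 2 with hBdef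
  set V : ℝ := ‖v‖ ^ 2 with hVdef
  have hp' : (⟪b, a⟫ : ℂ) = (starRingEnd ℂ) p := by rw [hp, inner_conj_symm]
  have hq' : (⟪v, a⟫ : ℂ) = (starRingEnd ℂ) q := by rw [hq, inner_conj_symm]
  have hr' : (⟪v, b⟫ : ℂ) = (starRingEnd ℂ) r := by rw [hr, inner_conj_symm]
  have haa : (⟪a,a⟫:ℂ) = ((A:ℝ):ℂ) := by
    rw [hAdef]; push_cast; exact inner_self_eq_norm_sq_to_K a
  have hbb : (⟪b,b⟫:ℂ) = ((B:ℝ):ℂ) := by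
    rw [hBdef]; push_cast; exact inner_self_eq_norm_sq_to_K b
  have hvv : (⟪v,v⟫:ℂ) = ((V:ℝ):ℂ) := by
    rw [hVdef]; push_cast; exact inner_self_eq_norm_sq_to_K v
  have eM : ‖(p • v + r • a - q • b : E)‖^2
      = (p.re^2+p.im^2)*V + A*(r.re^2+r.im^2) + B*(q.re^2+q.im^2)
        - 2*(p.re*(q.re*r.re+q.im*r.im) + p.im*(q.im*r.re - q.re*r.im)) := by
    rw [norm_sq_eq_re_inner (𝕜:=ℂ)]
    simp only [inner_add_left, inner_add_right, inner_sub_left, inner_sub_right,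
      inner_smul_left, inner_smul_right, ← hp, ← hq, ← hr, hp', hq', hr', haa, hbb, hvv]
    simp [Complex.mul_re, Complex.mul_im, Complex.conj_re, Complex.conj_im]
    ring
  set u : E := ((A:ℝ):ℂ) • b - p • a with hu
  set w : E := ((A:ℝ):ℂ) • v - q • a with hw
  have euu : ‖u‖^2 = A*(A*B - (p.re^2+p.im^2)) := by
    rw [norm_sq_eq_re_inner (𝕜:=ℂ)]
    rw [hu]
    simp only [inner_sub_left, inner_sub_right, inner_smul_left, inner_smul_right,
      ← hp, hp', haa, hbb]
    simp [Complex.mul_re, Complex.mul_im, Complex.conj_re, Complex.conj_im]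
    ring
  have eww : ‖w‖^2 = A*(A*V - (q.re^2+q.im^2)) := by
    rw [norm_sq_eq_re_inner (𝕜:=ℂ)]
    rw [hw]
    simp only [inner_sub_left, inner_sub_right, inner_smul_left, inner_smul_right,
      ← hq, hq', haa, hvv]
    simp [Complex.mul_re, Complex.mul_im, Complex.conj_re, Complex.conj_im]
    ring
  have euw : (⟪u, w⟫:ℂ) = ((A:ℝ):ℂ) * (((A:ℝ):ℂ) * r - (starRingEnd ℂ) p * q) := by
    rw [hu, hw]
    simp only [inner_sub_left, inner_sub_right, inner_smul_left, inner_smul_right,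
      ← hp, ← hq, ← hr, hp', hq', haa]
    ring_nf
    simp [Complex.conj_ofReal]
    ring
  have hCS : ‖(⟪u, w⟫:ℂ)‖^2 ≤ ‖u‖^2 * ‖w‖^2 := by
    have h := norm_inner_le_norm (𝕜 := ℂ) u w
    calc ‖(⟪u, w⟫:ℂ)‖^2 ≤ (‖u‖*‖w‖)^2 := by
          exact pow_le_pow_left₀ (norm_nonneg _) h 2
      _ = ‖u‖^2 * ‖w‖^2 := by ring
  have enuw : ‖(⟪u, w⟫:ℂ)‖^2
      = A^2 * ((A*r.re - (p.re*q.re + p.im*q.im))^2 + (A*r.im - (p.re*q.im - p.im*q.re))^2) := by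
    rw [euw, normsqC]
    simp [Complex.mul_re, Complex.mul_im, Complex.conj_re, Complex.conj_im,
      Complex.sub_re, Complex.sub_im]
    ring
  have hCS' : A^2 * ((A*r.re - (p.re*q.re + p.im*q.im))^2 + (A*r.im - (p.re*q.im - p.im*q.re))^2)
      ≤ (A*(A*B - (p.re^2+p.im^2))) * (A*(A*V - (q.re^2+q.im^2))) := by
    rw [← enuw, ← euu, ← eww]; exact hCS
  have hsq : ‖(p • v + r • a - q • b : E)‖^2 ≤ (‖a‖*‖b‖*‖v‖)^2 := by
    have h2 : (‖a‖*‖b‖*‖v‖)^2 = A*B*V := by rw [hAdef, hBdef, hVdef]; ring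
    rw [eM, h2]
    exact realCore A B V p.re p.im q.re q.im r.re r.im hA hCS'
  exact (pow_le_pow_iff_left₀ (norm_nonneg _) (by positivity) (two_ne_zero)).mp hsq

lemma lemAA (a b y1 y2 : E) :
    2 * ((⟪y1,y2⟫ * ⟪a,b⟫ + ⟪a,y1⟫ * ⟪y2,b⟫ - ⟪a,y2⟫ * ⟪y1,b⟫ : ℂ)).re
      ≤ ‖a‖^2 * ‖y2‖^2 + ‖b‖^2 * ‖y1‖^2 := by
  set M : E := (⟪a, b⟫ : ℂ) • y2 + (⟪b, y2⟫ : ℂ) • a - (⟪a, y2⟫ : ℂ) • b with hM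
  have h1 : (⟪y1,y2⟫ * ⟪a,b⟫ + ⟪a,y1⟫ * ⟪y2,b⟫ - ⟪a,y2⟫ * ⟪y1,b⟫ : ℂ).re
      = (⟪y1, M⟫ : ℂ).re := by
    rw [hM]
    simp only [inner_add_right, inner_sub_right, inner_smul_right]
    rw [show (⟪y1,a⟫:ℂ) = (starRingEnd ℂ) ⟪a,y1⟫ from (inner_conj_symm _ _).symm,
        show (⟪b,y2⟫:ℂ) = (starRingEnd ℂ) ⟪y2,b⟫ from (inner_conj_symm _ _).symm]
    simp only [Complex.add_re, Complex.sub_re, Complex.mul_re, Complex.conj_re, Complex.conj_im]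
    ring
  have h2 : (⟪y1, M⟫ : ℂ).re ≤ ‖y1‖ * ‖M‖ := re_inner_le_norm (𝕜 := ℂ) y1 M
  have h3 : ‖M‖ ≤ ‖a‖ * ‖b‖ * ‖y2‖ := lemB a b y2
  have h4 : ‖y1‖ * ‖M‖ ≤ ‖y1‖ * (‖a‖ * ‖b‖ * ‖y2‖) :=
    mul_le_mul_of_nonneg_left h3 (norm_nonneg y1)
  rw [h1]
  nlinarith [sq_nonneg (‖a‖ * ‖y2‖ - ‖b‖ * ‖y1‖), h2, h4]

open scoped ComplexOrder in
open Matrix in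
lemma keyE {n : ℕ} (a b y1 y2 : Fin n → ℂ) :
    (0:ℂ) ≤ (star a ⬝ᵥ a) * (star y2 ⬝ᵥ y2) + (star b ⬝ᵥ b) * (star y1 ⬝ᵥ y1)
      - ((star y1 ⬝ᵥ y2) * (star a ⬝ᵥ b) + (star y2 ⬝ᵥ y1) * (star b ⬝ᵥ a))
      - ((star a ⬝ᵥ y1) * (star y2 ⬝ᵥ b) + (star y1 ⬝ᵥ a) * (star b ⬝ᵥ y2))
      + ((star a ⬝ᵥ y2) * (star y1 ⬝ᵥ b) + (star y2 ⬝ᵥ a) * (star b ⬝ᵥ y1)) := by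
  letI a' : EuclideanSpace ℂ (Fin n) := (WithLp.equiv 2 _).symm a
  letI b' : EuclideanSpace ℂ (Fin n) := (WithLp.equiv 2 _).symm b
  letI y1' : EuclideanSpace ℂ (Fin n) := (WithLp.equiv 2 _).symm y1
  letI y2' : EuclideanSpace ℂ (Fin n) := (WithLp.equiv 2 _).symm y2
  have hd : ∀ (x y : Fin n → ℂ), star x ⬝ᵥ y
      = (⟪(WithLp.equiv 2 (Fin n → ℂ)).symm x, (WithLp.equiv 2 (Fin n → ℂ)).symm y⟫ : ℂ) := by
    intro x y
    rw [EuclideanSpace.inner_eq_star_dotProduct]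
    rw [dotProduct_comm]; rfl
  rw [hd a a, hd y2 y2, hd b b, hd y1 y1, hd y1 y2, hd a b, hd y2 y1, hd b a, hd a y1,
    hd y2 b, hd y1 a, hd b y2, hd a y2, hd y1 b, hd y2 a, hd b y1]
  set a' : EuclideanSpace ℂ (Fin n) := (WithLp.equiv 2 (Fin n → ℂ)).symm a with ha'
  set b' : EuclideanSpace ℂ (Fin n) := (WithLp.equiv 2 (Fin n → ℂ)).symm b with hb'
  set y1' : EuclideanSpace ℂ (Fin n) := (WithLp.equiv 2 (Fin n → ℂ)).symm y1 with hy1'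
  set y2' : EuclideanSpace ℂ (Fin n) := (WithLp.equiv 2 (Fin n → ℂ)).symm y2 with hy2'
  have e1 : (⟪a',a'⟫:ℂ) = ((‖a'‖^2 : ℝ):ℂ) := by push_cast; exact inner_self_eq_norm_sq_to_K a'
  have e2 : (⟪b',b'⟫:ℂ) = ((‖b'‖^2 : ℝ):ℂ) := by push_cast; exact inner_self_eq_norm_sq_to_K b'
  have e3 : (⟪y1',y1'⟫:ℂ) = ((‖y1'‖^2 : ℝ):ℂ) := by
    push_cast; exact inner_self_eq_norm_sq_to_K y1'
  have e4 : (⟪y2',y2'⟫:ℂ) = ((‖y2'‖^2 : ℝ):ℂ) := by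
    push_cast; exact inner_self_eq_norm_sq_to_K y2'
  have c1 : (⟪y2',y1'⟫:ℂ) * ⟪b',a'⟫ = (starRingEnd ℂ) ((⟪y1',y2'⟫:ℂ) * ⟪a',b'⟫) := by
    rw [_root_.map_mul, inner_conj_symm, inner_conj_symm]
  have c2 : (⟪y1',a'⟫:ℂ) * ⟪b',y2'⟫ = (starRingEnd ℂ) ((⟪a',y1'⟫:ℂ) * ⟪y2',b'⟫) := by
    rw [_root_.map_mul, inner_conj_symm, inner_conj_symm]
  have c3 : (⟪y2',a'⟫:ℂ) * ⟪b',y1'⟫ = (starRingEnd ℂ) ((⟪a',y2'⟫:ℂ) * ⟪y1',b'⟫) := by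
    rw [_root_.map_mul, inner_conj_symm, inner_conj_symm]
  rw [e1, e2, e3, e4, c1, c2, c3, Complex.add_conj, Complex.add_conj, Complex.add_conj]
  have hAA := lemAA a' b' y1' y2'
  have h5 : ((⟪y1',y2'⟫:ℂ)*⟪a',b'⟫ + (⟪a',y1'⟫:ℂ)*⟪y2',b'⟫ - (⟪a',y2'⟫:ℂ)*⟪y1',b'⟫).re
      = ((⟪y1',y2'⟫:ℂ)*⟪a',b'⟫).re + ((⟪a',y1'⟫:ℂ)*⟪y2',b'⟫).re
        - ((⟪a',y2'⟫:ℂ)*⟪y1',b'⟫).re := by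
    simp
  rw [h5] at hAA
  norm_cast
  linarith [hAA]

-- auxiliary matrix lemmas
lemma vmv_trace {m : Type*} [Fintype m] (x z : m → ℂ) :
    (Matrix.vecMulVec x z).trace = x ⬝ᵥ z := by
  simp [Matrix.trace, Matrix.diag, Matrix.vecMulVec_apply, dotProduct]

lemma vmv_mulVec {m : Type*} [Fintype m] (x z b : m → ℂ) :
    Matrix.vecMulVec x z *ᵥ b = (z ⬝ᵥ b) • x := by
  ext i
  simp only [Matrix.mulVec, Matrix.vecMulVec_apply, dotProduct, Pi.smul_apply, smul_eq_mul,
    Finset.sum_mul, Finset.mul_sum]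
  exact Finset.sum_congr rfl fun j _ => by ring

lemma phi_add (n : ℕ) (A B : Matrix (Fin n ⊕ Fin n) (Fin n ⊕ Fin n) ℂ) :
    Phi n (A + B) = Phi n A + Phi n B := by
  ext i j
  rcases i with i | i <;> rcases j with j | j <;>
    simp [Phi, Rmap, Matrix.fromBlocks, Matrix.toBlocks₁₁, Matrix.toBlocks₁₂,
      Matrix.toBlocks₂₁, Matrix.toBlocks₂₂, Matrix.trace, Matrix.diag, Matrix.add_apply,
      Matrix.smul_apply, Matrix.one_apply, Matrix.sub_apply, Finset.sum_add_distrib,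
      mul_add, add_mul] <;>
    split_ifs <;> ring

lemma star_dotstar {m : Type*} [Fintype m] (x z : m → ℂ) :
    star (x ⬝ᵥ star z) = z ⬝ᵥ star x := by
  simp [dotProduct, star_sum, mul_comm]

lemma vmvH {m : Type*} [Fintype m] (x z : m → ℂ) :
    (Matrix.vecMulVec x (star z))ᴴ = Matrix.vecMulVec z (star x) := by
  ext i j
  simp [Matrix.conjTranspose_apply, Matrix.vecMulVec_apply, mul_comm]

lemma phiRankOne (n : ℕ) (w : Fin n ⊕ Fin n → ℂ) :
    (Phi n (Matrix.vecMulVec w (star w))).PosSemidef := by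
  have hb11 : (Matrix.vecMulVec w (star w)).toBlocks₁₁
      = Matrix.vecMulVec (w ∘ Sum.inl) (star (w ∘ Sum.inl)) := rfl
  have hb12 : (Matrix.vecMulVec w (star w)).toBlocks₁₂
      = Matrix.vecMulVec (w ∘ Sum.inl) (star (w ∘ Sum.inr)) := rfl
  have hb21 : (Matrix.vecMulVec w (star w)).toBlocks₂₁
      = Matrix.vecMulVec (w ∘ Sum.inr) (star (w ∘ Sum.inl)) := rfl
  have hb22 : (Matrix.vecMulVec w (star w)).toBlocks₂₂
      = Matrix.vecMulVec (w ∘ Sum.inr) (star (w ∘ Sum.inr)) := rfl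
  set y1 : Fin n → ℂ := w ∘ Sum.inl with hy1
  set y2 : Fin n → ℂ := w ∘ Sum.inr with hy2
  have hinv : (0:ℂ) ≤ (n:ℂ)⁻¹ := by
    rw [show ((n:ℂ))⁻¹ = (((n:ℝ)⁻¹ : ℝ) : ℂ) by push_cast; ring]
    exact Complex.zero_le_real.mpr (by positivity)
  refine Matrix.PosSemidef.of_dotProduct_mulVec_nonneg ?_ ?_
  · -- Hermitian
    ext i j
    rcases i with i | i <;> rcases j with j | j <;>
      simp only [Phi, Rmap, Matrix.conjTranspose_apply, Matrix.smul_apply, Matrix.fromBlocks,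
        Matrix.toBlocks₁₁, Matrix.toBlocks₁₂, Matrix.toBlocks₂₁, Matrix.toBlocks₂₂,
        Matrix.sub_apply, Matrix.neg_apply, Matrix.one_apply, Matrix.of_apply, Sum.elim_inl,
        Sum.elim_inr, Matrix.trace, Matrix.diag, Matrix.vecMulVec_apply, smul_eq_mul,
        Pi.star_apply, star_mul', star_star, star_sum, apply_ite (starRingEnd ℂ),
        star_zero, star_one, star_inv₀, star_natCast, star_sub, star_smul, star_add,
        star_neg, Sum.elim_comp_inl_inr] <;>
      split_ifs <;>
      simp_all [mul_comm]
  · intro v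
    set a : Fin n → ℂ := v ∘ Sum.inl with ha
    set b : Fin n → ℂ := v ∘ Sum.inr with hb
    have hstarv : star v = Sum.elim (star a) (star b) := by
      funext i; cases i <;> rfl
    have heq : star v ⬝ᵥ (Phi n (Matrix.vecMulVec w (star w)) *ᵥ v)
        = (n:ℂ)⁻¹ *
          ((star a ⬝ᵥ a) * (star y2 ⬝ᵥ y2) + (star b ⬝ᵥ b) * (star y1 ⬝ᵥ y1)
          - ((star y1 ⬝ᵥ y2) * (star a ⬝ᵥ b) + (star y2 ⬝ᵥ y1) * (star b ⬝ᵥ a))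
          - ((star a ⬝ᵥ y1) * (star y2 ⬝ᵥ b) + (star y1 ⬝ᵥ a) * (star b ⬝ᵥ y2))
          + ((star a ⬝ᵥ y2) * (star y1 ⬝ᵥ b) + (star y2 ⬝ᵥ a) * (star b ⬝ᵥ y1))) := by
      rw [Phi, hb11, hb12, hb21, hb22, vmv_trace, vmv_trace]
      rw [Matrix.smul_mulVec, dotProduct_smul, smul_eq_mul]
      congr 1
      rw [Rmap, Rmap, vmv_trace, vmv_trace, Matrix.fromBlocks_mulVec, hstarv,
        sumElim_dotProduct_sumElim]
      simp only [Matrix.sub_mulVec, Matrix.neg_mulVec, Matrix.smul_mulVec,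
        Matrix.one_mulVec, vmv_mulVec, dotProduct_add, dotProduct_sub, dotProduct_neg,
        dotProduct_smul, smul_eq_mul, ← ha, ← hb]
      rw [dotProduct_comm y2 (star y2), dotProduct_comm y1 (star y1),
        dotProduct_comm y1 (star y2), dotProduct_comm y2 (star y1)]
      ring
    rw [heq]
    exact mul_nonneg hinv (keyE a b y1 y2)

lemma phi_zero (n : ℕ) : Phi n (0 : Matrix (Fin n ⊕ Fin n) (Fin n ⊕ Fin n) ℂ) = 0 := by
  ext i j
  rcases i with i | i <;> rcases j with j | j <;>
    simp [Phi, Rmap, Matrix.fromBlocks, Matrix.toBlocks₁₁, Matrix.toBlocks₁₂,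
      Matrix.toBlocks₂₁, Matrix.toBlocks₂₂, Matrix.trace, Matrix.diag, Matrix.one_apply]

lemma phi_sum (n : ℕ) {ι : Type*} (s : Finset ι)
    (f : ι → Matrix (Fin n ⊕ Fin n) (Fin n ⊕ Fin n) ℂ) :
    Phi n (∑ k ∈ s, f k) = ∑ k ∈ s, Phi n (f k) := by
  classical
  induction s using Finset.induction_on with
  | empty => simpa using phi_zero n
  | insert _ _ h ih => rw [Finset.sum_insert h, Finset.sum_insert h, phi_add, ih]


end Aux

set_option maxHeartbeats 1000000 in
/-- `Φ_n` is a positive map: it preserves positive semidefiniteness. -/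
theorem Phi_positive (n : ℕ) (hn : 2 ≤ n)
    (X : Matrix (Fin n ⊕ Fin n) (Fin n ⊕ Fin n) ℂ) (hX : X.PosSemidef) :
    (Phi n X).PosSemidef := by
  classical
  obtain ⟨m, B, hB⟩ := Matrix.posSemidef_iff_eq_sum_vecMulVec.mp hX
  have hsum : Phi n X = ∑ k : Fin m, Phi n (Matrix.vecMulVec (B k) (star (B k))) := by
    rw [hB, phi_sum]
  rw [hsum]
  apply Finset.sum_induction _ Matrix.PosSemidef (fun _ _ h1 h2 => h1.add h2)
    Matrix.PosSemidef.zero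
  intro k _
  exact phiRankOne n (B k)
end

section
/- The map Φ_n is irreducible: if Z ∈ M_{2n}(ℂ) satisfies [Φ_n(X), Z] = 0 for all X ∈ M_{2n}(ℂ), then Z = c·I_{2n} for some scalar c. -/
open scoped ComplexOrder

lemma Phi_offdiag (n : ℕ) (A B : Matrix (Fin n) (Fin n) ℂ) :
    Phi n (Matrix.fromBlocks 0 A B 0) =
      ((n : ℂ)⁻¹) • Matrix.fromBlocks 0 (-A - Rmap n B) (-B - Rmap n A) 0 := by
  simp [Phi, Matrix.toBlocks_fromBlocks₁₁, Matrix.toBlocks_fromBlocks₁₂,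
    Matrix.toBlocks_fromBlocks₂₁, Matrix.toBlocks_fromBlocks₂₂]

/-- `Φ_n` is irreducible: anything commuting with the whole range of `Φ_n`
is a scalar multiple of the identity. -/
theorem Phi_irreducible (n : ℕ) (hn : 2 ≤ n)
    (Z : Matrix (Fin n ⊕ Fin n) (Fin n ⊕ Fin n) ℂ)
    (hZ : ∀ X : Matrix (Fin n ⊕ Fin n) (Fin n ⊕ Fin n) ℂ,
      Phi n X * Z = Z * Phi n X) :
    ∃ c : ℂ, Z = c • (1 : Matrix (Fin n ⊕ Fin n) (Fin n ⊕ Fin n) ℂ) := by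
  have hn0 : (n : ℂ) ≠ 0 := Nat.cast_ne_zero.mpr (by omega)
  -- commutation with arbitrary (unscaled) off-diagonal images
  have hcomm : ∀ A B : Matrix (Fin n) (Fin n) ℂ,
      Matrix.fromBlocks 0 (-A - Rmap n B) (-B - Rmap n A) 0 * Z =
        Z * Matrix.fromBlocks 0 (-A - Rmap n B) (-B - Rmap n A) 0 := by
    intro A B
    have h := hZ (Matrix.fromBlocks 0 A B 0)
    rw [Phi_offdiag, Matrix.smul_mul, Matrix.mul_smul] at h
    exact smul_right_injective _ (inv_ne_zero hn0) h
  set Z11 := Z.toBlocks₁₁ with hZ11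
  set Z12 := Z.toBlocks₁₂ with hZ12
  set Z21 := Z.toBlocks₂₁ with hZ21
  set Z22 := Z.toBlocks₂₂ with hZ22
  have hZblocks : Z = Matrix.fromBlocks Z11 Z12 Z21 Z22 := (Matrix.fromBlocks_toBlocks Z).symm
  -- block equations from commutation with fromBlocks 0 P Q 0
  have hblk : ∀ P Q : Matrix (Fin n) (Fin n) ℂ,
      (Matrix.fromBlocks 0 P Q 0 * Z = Z * Matrix.fromBlocks 0 P Q 0) →
      P * Z21 = Z12 * Q ∧ P * Z22 = Z11 * P ∧ Q * Z11 = Z22 * Q ∧ Q * Z12 = Z21 * P := by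
    intro P Q h
    rw [hZblocks, Matrix.fromBlocks_multiply, Matrix.fromBlocks_multiply] at h
    have h' := Matrix.fromBlocks_inj.mp h
    refine ⟨by simpa using h'.1, by simpa using h'.2.1,
      by simpa using h'.2.2.1, by simpa using h'.2.2.2⟩
  -- commutation with J = fromBlocks 0 1 1 0
  have hJ : Matrix.fromBlocks 0 (1 : Matrix (Fin n) (Fin n) ℂ) 1 0 * Z =
      Z * Matrix.fromBlocks 0 (1 : Matrix (Fin n) (Fin n) ℂ) 1 0 := by
    have h := hcomm ((-(n : ℂ)⁻¹) • 1) ((-(n : ℂ)⁻¹) • 1)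
    have ht : ((-(n : ℂ)⁻¹) • (1 : Matrix (Fin n) (Fin n) ℂ)).trace = -1 := by
      rw [Matrix.trace_smul, Matrix.trace_one, Fintype.card_fin, smul_eq_mul]
      field_simp
    have e1 : -((-(n : ℂ)⁻¹) • (1 : Matrix (Fin n) (Fin n) ℂ))
        - Rmap n ((-(n : ℂ)⁻¹) • 1) = 1 := by
      rw [Rmap, ht]
      module
    rw [e1] at h
    exact h
  -- commutation with fromBlocks 0 C (-C) 0 for traceless C
  have hK : ∀ C : Matrix (Fin n) (Fin n) ℂ, C.trace = 0 →
      Matrix.fromBlocks 0 C (-C) 0 * Z = Z * Matrix.fromBlocks 0 C (-C) 0 := by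
    intro C hC
    have h := hcomm ((-(2 : ℂ)⁻¹) • C) (((2 : ℂ)⁻¹) • C)
    have hRp : Rmap n (((2 : ℂ)⁻¹) • C) = (-(2 : ℂ)⁻¹) • C := by
      simp [Rmap, Matrix.trace_smul, hC]
    have hRm : Rmap n ((-(2 : ℂ)⁻¹) • C) = ((2 : ℂ)⁻¹) • C := by
      simp [Rmap, Matrix.trace_smul, hC]
    rw [hRp, hRm] at h
    have e1 : -((-(2 : ℂ)⁻¹) • C) - (-(2 : ℂ)⁻¹) • C = C := by module
    have e2 : -(((2 : ℂ)⁻¹) • C) - ((2 : ℂ)⁻¹) • C = -C := by module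
    rw [e1, e2] at h
    exact h
  -- extract block identities
  obtain ⟨hJ1, hJ2, hJ3, hJ4⟩ := hblk 1 1 hJ
  simp only [Matrix.one_mul, Matrix.mul_one] at hJ1 hJ2 hJ3 hJ4
  -- so Z21 = Z12, Z22 = Z11
  have hK' : ∀ C : Matrix (Fin n) (Fin n) ℂ, C.trace = 0 →
      C * Z21 = -(Z12 * C) ∧ C * Z22 = Z11 * C := by
    intro C hC
    obtain ⟨h1, h2, _, _⟩ := hblk C (-C) (hK C hC)
    exact ⟨by simpa using h1, h2⟩
  -- Z11 commutes with all off-diagonal stdBasisMatrix, hence scalar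
  have hZ11scalar : Z11 ∈ Set.range (Matrix.scalar (Fin n)) := by
    apply Matrix.mem_range_scalar_of_commute_single
    intro i j hij
    have h := (hK' (Matrix.single i j 1)
      (Matrix.trace_single_eq_of_ne i j 1 hij)).2
    rw [hJ2] at h
    exact h
  obtain ⟨c, hc⟩ := hZ11scalar
  -- Z12 anticommutes with all traceless matrices, hence is zero
  have hW : ∀ C : Matrix (Fin n) (Fin n) ℂ, C.trace = 0 → C * Z12 = -(Z12 * C) := by
    intro C hC
    have h := (hK' C hC).1
    rwa [hJ1] at h
  have hZ12zero : Z12 = 0 := by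
    ext k l
    by_cases hkl : k = l
    · -- diagonal entry: use C = E k k - E j j for some j ≠ k
      subst hkl
      obtain ⟨j, hj⟩ : ∃ j : Fin n, j ≠ k := by
        rcases Decidable.eq_or_ne k ⟨0, by omega⟩ with h0 | h0
        · exact ⟨⟨1, by omega⟩, by subst h0; simp [Fin.ext_iff]⟩
        · exact ⟨⟨0, by omega⟩, Ne.symm (by simpa [eq_comm] using h0)⟩
      have hC : (Matrix.single k k (1:ℂ) - Matrix.single j j 1).trace = 0 := by
        simp [Matrix.trace_sub, Matrix.trace_single_eq_same]
      have h := hW _ hC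
      have h' := congrFun (congrFun h k) k
      simp only [Matrix.sub_mul, Matrix.mul_sub, Matrix.sub_apply, Matrix.neg_apply,
        Matrix.single_mul_apply_same, Matrix.mul_single_apply_same,
        Matrix.single_mul_apply_of_ne _ _ _ _ _ hj.symm,
        Matrix.mul_single_apply_of_ne _ _ _ _ _ hj.symm] at h'
      simp only [one_mul, mul_one, sub_zero] at h'
      -- h' : Z12 k k = -(Z12 k k)
      have hzz : Z12 k k = 0 := by linear_combination h' / 2
      simpa using hzz
    · -- off-diagonal entry: use C = E i k for some i ≠ k
      obtain ⟨i, hi⟩ : ∃ i : Fin n, i ≠ k := by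
        rcases Decidable.eq_or_ne k ⟨0, by omega⟩ with h0 | h0
        · exact ⟨⟨1, by omega⟩, by subst h0; simp [Fin.ext_iff]⟩
        · exact ⟨⟨0, by omega⟩, Ne.symm (by simpa [eq_comm] using h0)⟩
      have hC : (Matrix.single i k (1:ℂ)).trace = 0 :=
        Matrix.trace_single_eq_of_ne i k 1 hi
      have h := hW _ hC
      have h' := congrFun (congrFun h i) l
      simp only [Matrix.neg_apply, Matrix.single_mul_apply_same,
        Matrix.mul_single_apply_of_ne _ _ _ _ _ (Ne.symm hkl)] at h'
      simpa using h'
  -- finish: Z = fromBlocks (c•1) 0 0 (c•1) = c • 1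
  refine ⟨c, ?_⟩
  have hc1 : Z11 = c • 1 := by
    rw [← hc, Matrix.scalar_apply, Matrix.smul_one_eq_diagonal]
  rw [hZblocks, hJ1, hJ2, hZ12zero, hc1]
  rw [show (1 : Matrix (Fin n ⊕ Fin n) (Fin n ⊕ Fin n) ℂ) = Matrix.fromBlocks 1 0 0 1
    from Matrix.fromBlocks_one.symm, Matrix.fromBlocks_smul]
  simp
end

section
/- Every tensor Ψ ∈ (ℂ^n)^{⊗3} can be written as Ψ = A + B with A totally symmetric (A ∈ S_{123}) and B satisfying Σ_i B_{iji} = 0 for all j (B ∈ T_{13}); i.e., (ℂ^n)^{⊗3} = S_{123} + T_{13}. -/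
/-- Every tensor in `(ℂ^n)^{⊗3}` decomposes (not necessarily uniquely) as a sum
of a totally symmetric tensor and one with vanishing `1-3` partial trace. -/
theorem decompose_S123_T13 (n : ℕ) (Ψ : Fin n × Fin n × Fin n → ℂ) :
    ∃ A B : Fin n × Fin n × Fin n → ℂ,
      (∀ i j k : Fin n,
        A (i, j, k) = A (i, k, j) ∧ A (i, j, k) = A (j, i, k) ∧
        A (i, j, k) = A (j, k, i) ∧ A (i, j, k) = A (k, i, j) ∧
        A (i, j, k) = A (k, j, i)) ∧
      (∀ j : Fin n, (∑ i : Fin n, B (i, j, i)) = 0) ∧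
      Ψ = A + B := by
  rcases Nat.eq_zero_or_pos n with hn | hn
  · subst hn
    exact ⟨Ψ, 0, fun i => absurd i.2 (by omega), fun j => by simp, by simp⟩
  · have hn0 : (n : ℂ) ≠ 0 := Nat.cast_ne_zero.mpr hn.ne'
    set c : Fin n → ℂ := fun j => ∑ i : Fin n, Ψ (i, j, i) with hc
    set S : ℂ := (∑ j, c j) / (3 * n) with hS
    set f : Fin n → ℂ := fun j => (c j - 2 * S) / n with hf
    have hSc : ∑ j, c j = 3 * n * S := by
      rw [hS]; field_simp
    have hsf : ∑ j, f j = S := by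
      simp only [hf]
      rw [← Finset.sum_div, Finset.sum_sub_distrib, hSc, Finset.sum_const,
        Finset.card_univ, Fintype.card_fin, nsmul_eq_mul]
      field_simp; ring
    refine ⟨fun p => f p.1 + f p.2.1 + f p.2.2,
      Ψ - fun p => f p.1 + f p.2.1 + f p.2.2, ?_, ?_, by ext p; simp⟩
    · intro i j k; refine ⟨by ring, by ring, by ring, by ring, by ring⟩
    · intro j
      have h2 : ∑ i : Fin n, (f i + f j + f i) = 2 * S + n * f j := by
        rw [Finset.sum_add_distrib, Finset.sum_add_distrib, hsf,
          Finset.sum_const, Finset.card_univ, Fintype.card_fin, nsmul_eq_mul]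
        ring
      have key : ∑ i : Fin n, (Ψ (i, j, i) - (f i + f j + f i)) = 0 := by
        rw [Finset.sum_sub_distrib, h2]
        show c j - (2 * S + n * ((c j - 2 * S) / n)) = 0
        field_simp; ring
      simpa using key
end

section
/- For x = σ ⊗ φ ∈ ℂ² ⊗ ℂ^n with σ = (α,β) and ‖φ‖ = 1, one has n·Φ_n(|x⟩⟨x|) = Π_{(β,−α)} ⊗ Π_φ^⊥ + Π_{(β̄,−ᾱ)} ⊗ Π_φ, where Π_v denotes the orthogonal projection onto the span of v and Π_φ^⊥ = I_n − Π_φ. -/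
open scoped ComplexOrder

open ComplexConjugate

/-- The (unnormalized) rank-one projector `|v⟩⟨v|`; it is the orthogonal
projection onto `span{v}` whenever `‖v‖ = 1`. -/
noncomputable def outer {ι : Type*} (v : ι → ℂ) : Matrix ι ι ℂ :=
  Matrix.vecMulVec v (star v)

/-- Kronecker product `A ⊗ B` of a `2 × 2` matrix with an `n × n` matrix,
realized as a block matrix on `ℂ^n ⊕ ℂ^n`. -/
noncomputable def kron {n : ℕ} (A : Matrix (Fin 2) (Fin 2) ℂ)
    (B : Matrix (Fin n) (Fin n) ℂ) :
    Matrix (Fin n ⊕ Fin n) (Fin n ⊕ Fin n) ℂ :=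
  Matrix.fromBlocks (A 0 0 • B) (A 0 1 • B) (A 1 0 • B) (A 1 1 • B)

/-- For a product vector `x = σ ⊗ φ` with `σ = (α, β)`, `‖σ‖ = ‖φ‖ = 1`:
`n·Φ_n(|x⟩⟨x|) = Π_{(β,−α)} ⊗ Π_φ^⊥ + Π_{(β̄,−ᾱ)} ⊗ Π_φ`. -/
theorem Phi_on_product_vector (n : ℕ) (hn : 2 ≤ n)
    (σ : Fin 2 → ℂ) (φ : Fin n → ℂ)
    (hσ : (∑ i : Fin 2, conj (σ i) * σ i) = 1)
    (hφ : (∑ i : Fin n, conj (φ i) * φ i) = 1) :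
    (n : ℂ) • Phi n (outer (Sum.elim (fun i => σ 0 * φ i) (fun i => σ 1 * φ i))) =
      kron (outer ![σ 1, -(σ 0)]) (1 - outer φ) +
      kron (outer ![conj (σ 1), -(conj (σ 0))]) (outer φ) := by
  have hn0 : (n : ℂ) ≠ 0 := Nat.cast_ne_zero.mpr (by omega)
  have key : ∀ a b : ℂ, (∑ i : Fin n, (a * φ i) * conj (b * φ i)) = a * conj b := by
    intro a b
    have h : ∀ i : Fin n, (a * φ i) * conj (b * φ i) = (a * conj b) * (conj (φ i) * φ i) := by
      intro i; simp [map_mul]; ring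
    rw [Finset.sum_congr rfl (fun i _ => h i), ← Finset.mul_sum, hφ, mul_one]
  have hc : (n : ℂ) * (n : ℂ)⁻¹ = 1 := mul_inv_cancel₀ hn0
  ext i j
  rcases i with i | i <;> rcases j with j | j <;>
    simp only [Phi, Rmap, outer, kron, Matrix.smul_apply, Matrix.fromBlocks_apply₁₁,
      Matrix.fromBlocks_apply₁₂, Matrix.fromBlocks_apply₂₁, Matrix.fromBlocks_apply₂₂,
      Matrix.add_apply, Matrix.sub_apply, Matrix.neg_apply, Matrix.one_apply,
      Matrix.vecMulVec_apply, Pi.star_apply, Sum.elim_inl, Sum.elim_inr,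
      Matrix.toBlocks₁₁, Matrix.toBlocks₁₂, Matrix.toBlocks₂₁, Matrix.toBlocks₂₂,
      Matrix.trace, Matrix.diag, Matrix.of_apply, smul_eq_mul, RCLike.star_def,
      Matrix.cons_val_zero, Matrix.cons_val_one, Matrix.head_cons] <;>
    rw [key] <;>
    simp only [map_mul, map_neg, RingHom.map_one, Complex.conj_conj] <;>
    rw [← mul_assoc, hc] <;>
    by_cases hij : i = j <;> simp [hij] <;> ring
end

section
/- For x = σ ⊗ φ with σ ∈ ℂ², φ ∈ ℂ^n, ‖σ‖ = ‖φ‖ = 1, the kernel of Φ_n(|x⟩⟨x|) is spanned by σ ⊗ φ together with all vectors σ̄ ⊗ φ^⊥ where φ^⊥ ranges over the orthogonal complement of φ in ℂ^n; in particular dim ker Φ_n(|x⟩⟨x|) = n. -/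
open scoped ComplexOrder

open ComplexConjugate

section Aux

variable (n : ℕ) (σ : Fin 2 → ℂ) (φ : Fin n → ℂ)

lemma phi_entry_inl (hφ : (∑ i : Fin n, conj (φ i) * φ i) = 1)
    (w : Fin n ⊕ Fin n → ℂ) (i : Fin n) :
    (Phi n (Matrix.vecMulVec (Sum.elim (fun i => σ 0 * φ i) (fun i => σ 1 * φ i))
      (star (Sum.elim (fun i => σ 0 * φ i) (fun i => σ 1 * φ i))))).mulVec w (Sum.inl i)
    = (n : ℂ)⁻¹ * (σ 1 * conj (σ 1) * w (Sum.inl i) - σ 1 * conj (σ 0) * w (Sum.inr i)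
      + (σ 1 * conj (σ 0) - σ 0 * conj (σ 1)) * φ i * (∑ j, conj (φ j) * w (Sum.inr j))) := by
  simp [Phi, Rmap, Matrix.mulVec, dotProduct, Fintype.sum_sum_type,
    Matrix.fromBlocks, Matrix.toBlocks₁₁, Matrix.toBlocks₁₂, Matrix.toBlocks₂₁, Matrix.toBlocks₂₂,
    Matrix.vecMulVec_apply, Matrix.trace, Matrix.diag, Matrix.one_apply, Finset.mul_sum,
    Matrix.smul_apply, Matrix.sub_apply, Matrix.neg_apply, mul_add, mul_sub, sub_mul, add_mul]
  have e1 : ∀ a b : ℂ, ∑ j : Fin n, (↑n)⁻¹ * (a * φ j * (b * conj (φ j))) = (↑n)⁻¹ * (a * b) := by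
    intro a b
    have : ∑ j : Fin n, (↑n)⁻¹ * (a * φ j * (b * conj (φ j)))
        = (↑n)⁻¹ * (a * b) * ∑ j : Fin n, conj (φ j) * φ j := by
      rw [Finset.mul_sum]; exact Finset.sum_congr rfl fun j _ => by ring
    rw [this, hφ, mul_one]
  have e2 : ∀ a b c : ℂ, ∑ x : Fin n, (↑n)⁻¹ * (a * b * (c * conj (φ x))) * w (Sum.inr x)
      = (↑n)⁻¹ * (a * b * c) * ∑ j : Fin n, conj (φ j) * w (Sum.inr j) := by
    intro a b c; rw [Finset.mul_sum]; exact Finset.sum_congr rfl fun j _ => by ring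
  have e3 : ∀ a b c : ℂ, ∑ x : Fin n, (↑n)⁻¹ * (a * b * c * (conj (φ x) * w (Sum.inr x)))
      = (↑n)⁻¹ * (a * b * c) * ∑ j : Fin n, conj (φ j) * w (Sum.inr j) := by
    intro a b c; rw [Finset.mul_sum]; exact Finset.sum_congr rfl fun j _ => by ring
  rw [e1, e1, e2, e2, e3, e3]
  ring

lemma phi_entry_inr (hφ : (∑ i : Fin n, conj (φ i) * φ i) = 1)
    (w : Fin n ⊕ Fin n → ℂ) (i : Fin n) :
    (Phi n (Matrix.vecMulVec (Sum.elim (fun i => σ 0 * φ i) (fun i => σ 1 * φ i))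
      (star (Sum.elim (fun i => σ 0 * φ i) (fun i => σ 1 * φ i))))).mulVec w (Sum.inr i)
    = (n : ℂ)⁻¹ * (σ 0 * conj (σ 0) * w (Sum.inr i) - σ 0 * conj (σ 1) * w (Sum.inl i)
      + (σ 0 * conj (σ 1) - σ 1 * conj (σ 0)) * φ i * (∑ j, conj (φ j) * w (Sum.inl j))) := by
  simp [Phi, Rmap, Matrix.mulVec, dotProduct, Fintype.sum_sum_type,
    Matrix.fromBlocks, Matrix.toBlocks₁₁, Matrix.toBlocks₁₂, Matrix.toBlocks₂₁, Matrix.toBlocks₂₂,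
    Matrix.vecMulVec_apply, Matrix.trace, Matrix.diag, Matrix.one_apply, Finset.mul_sum,
    Matrix.smul_apply, Matrix.sub_apply, Matrix.neg_apply, mul_add, mul_sub, sub_mul, add_mul]
  have e1 : ∀ a b : ℂ, ∑ j : Fin n, (↑n)⁻¹ * (a * φ j * (b * conj (φ j))) = (↑n)⁻¹ * (a * b) := by
    intro a b
    have : ∑ j : Fin n, (↑n)⁻¹ * (a * φ j * (b * conj (φ j)))
        = (↑n)⁻¹ * (a * b) * ∑ j : Fin n, conj (φ j) * φ j := by
      rw [Finset.mul_sum]; exact Finset.sum_congr rfl fun j _ => by ring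
    rw [this, hφ, mul_one]
  have e2 : ∀ a b c : ℂ, ∑ x : Fin n, (↑n)⁻¹ * (a * b * (c * conj (φ x))) * w (Sum.inl x)
      = (↑n)⁻¹ * (a * b * c) * ∑ j : Fin n, conj (φ j) * w (Sum.inl j) := by
    intro a b c; rw [Finset.mul_sum]; exact Finset.sum_congr rfl fun j _ => by ring
  have e3 : ∀ a b c : ℂ, ∑ x : Fin n, (↑n)⁻¹ * (a * b * c * (conj (φ x) * w (Sum.inl x)))
      = (↑n)⁻¹ * (a * b * c) * ∑ j : Fin n, conj (φ j) * w (Sum.inl j) := by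
    intro a b c; rw [Finset.mul_sum]; exact Finset.sum_congr rfl fun j _ => by ring
  rw [e1, e1, e2, e2, e3, e3]
  ring

end Aux

/-- For a normalized product vector `x = σ ⊗ φ ∈ ℂ² ⊗ ℂ^n ≅ ℂ^n ⊕ ℂ^n`, the
kernel of `Φ_n(|x⟩⟨x|)` is spanned by `σ ⊗ φ` and the vectors `σ̄ ⊗ φ^⊥`
with `φ^⊥ ⊥ φ`; in particular the kernel is `n`-dimensional. -/
theorem Phi_product_vector_kernel (n : ℕ) (hn : 2 ≤ n)
    (σ : Fin 2 → ℂ) (φ : Fin n → ℂ)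
    (hσ : (∑ i : Fin 2, conj (σ i) * σ i) = 1)
    (hφ : (∑ i : Fin n, conj (φ i) * φ i) = 1) :
    LinearMap.ker (Matrix.toLin' (Phi n
        (Matrix.vecMulVec (Sum.elim (fun i => σ 0 * φ i) (fun i => σ 1 * φ i))
          (star (Sum.elim (fun i => σ 0 * φ i) (fun i => σ 1 * φ i)))))) =
      Submodule.span ℂ
        ({Sum.elim (fun i => σ 0 * φ i) (fun i => σ 1 * φ i)} ∪
          {y : Fin n ⊕ Fin n → ℂ | ∃ ψ : Fin n → ℂ,
            (∑ i : Fin n, conj (φ i) * ψ i) = 0 ∧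
            y = Sum.elim (fun i => conj (σ 0) * ψ i) (fun i => conj (σ 1) * ψ i)}) ∧
    Module.finrank ℂ
      (LinearMap.ker (Matrix.toLin' (Phi n
        (Matrix.vecMulVec (Sum.elim (fun i => σ 0 * φ i) (fun i => σ 1 * φ i))
          (star (Sum.elim (fun i => σ 0 * φ i) (fun i => σ 1 * φ i))))))) = n := by
  have hσ2 : conj (σ 0) * σ 0 + conj (σ 1) * σ 1 = 1 := by
    rw [← hσ, Fin.sum_univ_two]
  have hn0 : (n : ℂ)⁻¹ ≠ 0 := by
    simp only [ne_eq, inv_eq_zero, Nat.cast_eq_zero]; omega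
  set x : Fin n ⊕ Fin n → ℂ := Sum.elim (fun i => σ 0 * φ i) (fun i => σ 1 * φ i) with hx
  -- the span generating set
  set S : Set (Fin n ⊕ Fin n → ℂ) :=
    ({x} ∪ {y : Fin n ⊕ Fin n → ℂ | ∃ ψ : Fin n → ℂ,
      (∑ i : Fin n, conj (φ i) * ψ i) = 0 ∧
      y = Sum.elim (fun i => conj (σ 0) * ψ i) (fun i => conj (σ 1) * ψ i)}) with hS
  have hker : LinearMap.ker (Matrix.toLin' (Phi n (Matrix.vecMulVec x (star x))))
      = Submodule.span ℂ S := by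
    apply le_antisymm
    · -- ker ⊆ span
      intro w hw
      rw [LinearMap.mem_ker, Matrix.toLin'_apply] at hw
      set t : ℂ := ∑ j : Fin n, conj (φ j) * w (Sum.inl j) with ht
      set s : ℂ := ∑ j : Fin n, conj (φ j) * w (Sum.inr j) with hs
      set c : ℂ := conj (σ 0) * t + conj (σ 1) * s with hc
      set ψ : Fin n → ℂ :=
        fun j => σ 0 * (w (Sum.inl j) - t * φ j) + σ 1 * (w (Sum.inr j) - s * φ j) with hψ
      have hψ0 : (∑ i : Fin n, conj (φ i) * ψ i) = 0 := by
        have e : ∀ j : Fin n, conj (φ j) * ψ j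
            = σ 0 * (conj (φ j) * w (Sum.inl j)) + σ 1 * (conj (φ j) * w (Sum.inr j))
              - (σ 0 * t + σ 1 * s) * (conj (φ j) * φ j) := fun j => by
          simp only [hψ]; ring
        rw [Finset.sum_congr rfl (fun j _ => e j), Finset.sum_sub_distrib,
          Finset.sum_add_distrib, ← Finset.mul_sum, ← Finset.mul_sum, ← Finset.mul_sum,
          hφ, ← ht, ← hs]
        ring
      have hdec : w = c • x + Sum.elim (fun i => conj (σ 0) * ψ i)
          (fun i => conj (σ 1) * ψ i) := by
        funext k
        have hwk := congrFun hw k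
        cases k with
        | inl i =>
          have h := phi_entry_inl n σ φ hφ w i
          rw [hwk] at h
          have E : σ 1 * conj (σ 1) * w (Sum.inl i) - σ 1 * conj (σ 0) * w (Sum.inr i)
              + (σ 1 * conj (σ 0) - σ 0 * conj (σ 1)) * φ i * s = 0 := by
            have h0 := h.symm
            rw [Pi.zero_apply] at h0
            exact (mul_eq_zero.mp h0).resolve_left hn0
          simp only [Pi.add_apply, Pi.smul_apply, Sum.elim_inl, smul_eq_mul, hψ, hc, hx]
          linear_combination E - w (Sum.inl i) * hσ2
        | inr i =>
          have h := phi_entry_inr n σ φ hφ w i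
          rw [hwk] at h
          have E : σ 0 * conj (σ 0) * w (Sum.inr i) - σ 0 * conj (σ 1) * w (Sum.inl i)
              + (σ 0 * conj (σ 1) - σ 1 * conj (σ 0)) * φ i * t = 0 := by
            have h0 := h.symm
            rw [Pi.zero_apply] at h0
            exact (mul_eq_zero.mp h0).resolve_left hn0
          simp only [Pi.add_apply, Pi.smul_apply, Sum.elim_inr, smul_eq_mul, hψ, hc, hx]
          linear_combination E - w (Sum.inr i) * hσ2
      rw [hdec]
      refine Submodule.add_mem _ (Submodule.smul_mem _ _ ?_) ?_
      · exact Submodule.subset_span (Or.inl rfl)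
      · exact Submodule.subset_span (Or.inr ⟨ψ, hψ0, rfl⟩)
    · -- span ⊆ ker
      rw [Submodule.span_le]
      rintro y (rfl | ⟨ψ, hψ0, rfl⟩) <;>
        rw [SetLike.mem_coe, LinearMap.mem_ker, Matrix.toLin'_apply] <;> funext k
      · have hsx : (∑ j : Fin n, conj (φ j) * x (Sum.inr j)) = σ 1 := by
          simp only [hx, Sum.elim_inr]
          rw [show (∑ j : Fin n, conj (φ j) * (σ 1 * φ j)) = σ 1 * ∑ j : Fin n, conj (φ j) * φ j
            from by rw [Finset.mul_sum]; exact Finset.sum_congr rfl fun j _ => by ring, hφ,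
            mul_one]
        have htx : (∑ j : Fin n, conj (φ j) * x (Sum.inl j)) = σ 0 := by
          simp only [hx, Sum.elim_inl]
          rw [show (∑ j : Fin n, conj (φ j) * (σ 0 * φ j)) = σ 0 * ∑ j : Fin n, conj (φ j) * φ j
            from by rw [Finset.mul_sum]; exact Finset.sum_congr rfl fun j _ => by ring, hφ,
            mul_one]
        cases k with
        | inl i =>
          rw [phi_entry_inl n σ φ hφ x i, hsx]
          simp only [hx, Sum.elim_inl, Sum.elim_inr, Pi.zero_apply]
          ring
        | inr i =>
          rw [phi_entry_inr n σ φ hφ x i, htx]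
          simp only [hx, Sum.elim_inl, Sum.elim_inr, Pi.zero_apply]
          ring
      · set y : Fin n ⊕ Fin n → ℂ :=
          Sum.elim (fun i => conj (σ 0) * ψ i) (fun i => conj (σ 1) * ψ i) with hy
        have hsy : (∑ j : Fin n, conj (φ j) * y (Sum.inr j)) = 0 := by
          simp only [hy, Sum.elim_inr]
          rw [show (∑ j : Fin n, conj (φ j) * (conj (σ 1) * ψ j))
              = conj (σ 1) * ∑ j : Fin n, conj (φ j) * ψ j
            from by rw [Finset.mul_sum]; exact Finset.sum_congr rfl fun j _ => by ring, hψ0,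
            mul_zero]
        have hty : (∑ j : Fin n, conj (φ j) * y (Sum.inl j)) = 0 := by
          simp only [hy, Sum.elim_inl]
          rw [show (∑ j : Fin n, conj (φ j) * (conj (σ 0) * ψ j))
              = conj (σ 0) * ∑ j : Fin n, conj (φ j) * ψ j
            from by rw [Finset.mul_sum]; exact Finset.sum_congr rfl fun j _ => by ring, hψ0,
            mul_zero]
        cases k with
        | inl i =>
          rw [phi_entry_inl n σ φ hφ y i, hsy]
          simp only [hy, Sum.elim_inl, Sum.elim_inr, Pi.zero_apply]
          ring
        | inr i =>
          rw [phi_entry_inr n σ φ hφ y i, hty]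
          simp only [hy, Sum.elim_inl, Sum.elim_inr, Pi.zero_apply]
          ring
  refine ⟨hker, ?_⟩
  rw [hker]
  -- dimension count
  have hφne : ∃ i, φ i ≠ 0 := by
    by_contra h
    push_neg at h
    simp [h] at hφ
  have hxne : x ≠ 0 := by
    intro h0
    obtain ⟨i, hi⟩ := hφne
    have h1 : σ 0 * φ i = 0 := congrFun h0 (Sum.inl i)
    have h2 : σ 1 * φ i = 0 := congrFun h0 (Sum.inr i)
    have hs0 : σ 0 = 0 := by rcases mul_eq_zero.mp h1 with h | h; exact h; exact absurd h hi
    have hs1 : σ 1 = 0 := by rcases mul_eq_zero.mp h2 with h | h; exact h; exact absurd h hi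
    rw [hs0, hs1] at hσ2
    simp at hσ2
  set f : (Fin n → ℂ) →ₗ[ℂ] ℂ :=
    { toFun := fun ψ => ∑ i : Fin n, conj (φ i) * ψ i
      map_add' := fun a b => by simp [mul_add, Finset.sum_add_distrib]
      map_smul' := fun c a => by
        simp only [Pi.smul_apply, smul_eq_mul, RingHom.id_apply, Finset.mul_sum]
        exact Finset.sum_congr rfl fun i _ => by ring } with hf
  set L : (Fin n → ℂ) →ₗ[ℂ] (Fin n ⊕ Fin n → ℂ) :=
    { toFun := fun ψ => Sum.elim (fun i => conj (σ 0) * ψ i) (fun i => conj (σ 1) * ψ i)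
      map_add' := fun a b => by funext k; cases k <;> simp [mul_add]
      map_smul' := fun c a => by funext k; cases k <;> simp <;> ring } with hL
  have hLinj : Function.Injective L := by
    rw [← LinearMap.ker_eq_bot, eq_bot_iff]
    intro ψ hψ
    rw [LinearMap.mem_ker] at hψ
    have hz : ∀ i, ψ i = 0 := by
      intro i
      have h1 : conj (σ 0) * ψ i = 0 := congrFun hψ (Sum.inl i)
      have h2 : conj (σ 1) * ψ i = 0 := congrFun hψ (Sum.inr i)
      calc ψ i = (conj (σ 0) * σ 0 + conj (σ 1) * σ 1) * ψ i := by rw [hσ2, one_mul]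
        _ = σ 0 * (conj (σ 0) * ψ i) + σ 1 * (conj (σ 1) * ψ i) := by ring
        _ = 0 := by rw [h1, h2]; ring
    simp only [Submodule.mem_bot]
    exact funext hz
  have hS2 : {y : Fin n ⊕ Fin n → ℂ | ∃ ψ : Fin n → ℂ,
      (∑ i : Fin n, conj (φ i) * ψ i) = 0 ∧
      y = Sum.elim (fun i => conj (σ 0) * ψ i) (fun i => conj (σ 1) * ψ i)}
      = L '' (LinearMap.ker f : Set (Fin n → ℂ)) := by
    ext y
    constructor
    · rintro ⟨ψ, h0, rfl⟩
      exact ⟨ψ, by rwa [SetLike.mem_coe, LinearMap.mem_ker], rfl⟩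
    · rintro ⟨ψ, hmem, rfl⟩
      exact ⟨ψ, by rwa [SetLike.mem_coe, LinearMap.mem_ker] at hmem, rfl⟩
  rw [hS, Submodule.span_union, hS2, Submodule.span_image, Submodule.span_eq]
  have hrange : LinearMap.range f = ⊤ := by
    rw [LinearMap.range_eq_top]
    intro c
    refine ⟨fun i => c * φ i, ?_⟩
    show (∑ i : Fin n, conj (φ i) * (c * φ i)) = c
    rw [show (∑ i : Fin n, conj (φ i) * (c * φ i)) = c * ∑ i : Fin n, conj (φ i) * φ i
      from by rw [Finset.mul_sum]; exact Finset.sum_congr rfl fun i _ => by ring, hφ, mul_one]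
  have hrn := LinearMap.finrank_range_add_finrank_ker f
  rw [hrange] at hrn
  have hkerf : Module.finrank ℂ (LinearMap.ker f) = n - 1 := by
    have h1 : Module.finrank ℂ (⊤ : Submodule ℂ ℂ) = 1 := by
      rw [finrank_top]; exact Module.finrank_self ℂ
    have h2 : Module.finrank ℂ (Fin n → ℂ) = n := Module.finrank_fin_fun ℂ
    omega
  have hmaprank : Module.finrank ℂ (Submodule.map L (LinearMap.ker f))
      = n - 1 := by
    rw [← LinearEquiv.finrank_eq (Submodule.equivMapOfInjective L hLinj (LinearMap.ker f))]
    exact hkerf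
  have hdisj : Submodule.span ℂ {x} ⊓ Submodule.map L (LinearMap.ker f) = ⊥ := by
    rw [eq_bot_iff]
    rintro z hz
    rw [Submodule.mem_inf] at hz
    obtain ⟨hz1, hz2⟩ := hz
    obtain ⟨c, rfl⟩ := Submodule.mem_span_singleton.mp hz1
    obtain ⟨ψ, hψker, hLψ⟩ := hz2
    have hψ0 : (∑ i : Fin n, conj (φ i) * ψ i) = 0 := hψker
    have h1 : c * σ 0 = 0 := by
      have := congrArg (fun v : Fin n ⊕ Fin n → ℂ => ∑ i : Fin n, conj (φ i) * v (Sum.inl i)) hLψ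
      simp only [Pi.smul_apply, smul_eq_mul] at this
      rw [show (∑ i : Fin n, conj (φ i) * (L ψ) (Sum.inl i))
          = conj (σ 0) * ∑ i : Fin n, conj (φ i) * ψ i from by
        simp only [hL, LinearMap.coe_mk, AddHom.coe_mk, Sum.elim_inl, Finset.mul_sum]
        exact Finset.sum_congr rfl fun i _ => by ring, hψ0, mul_zero] at this
      rw [show (∑ i : Fin n, conj (φ i) * (c * x (Sum.inl i)))
          = c * σ 0 * ∑ i : Fin n, conj (φ i) * φ i from by
        simp only [hx, Sum.elim_inl, Finset.mul_sum]
        exact Finset.sum_congr rfl fun i _ => by ring, hφ, mul_one] at this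
      exact this.symm
    have h2 : c * σ 1 = 0 := by
      have := congrArg (fun v : Fin n ⊕ Fin n → ℂ => ∑ i : Fin n, conj (φ i) * v (Sum.inr i)) hLψ
      simp only [Pi.smul_apply, smul_eq_mul] at this
      rw [show (∑ i : Fin n, conj (φ i) * (L ψ) (Sum.inr i))
          = conj (σ 1) * ∑ i : Fin n, conj (φ i) * ψ i from by
        simp only [hL, LinearMap.coe_mk, AddHom.coe_mk, Sum.elim_inr, Finset.mul_sum]
        exact Finset.sum_congr rfl fun i _ => by ring, hψ0, mul_zero] at this
      rw [show (∑ i : Fin n, conj (φ i) * (c * x (Sum.inr i)))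
          = c * σ 1 * ∑ i : Fin n, conj (φ i) * φ i from by
        simp only [hx, Sum.elim_inr, Finset.mul_sum]
        exact Finset.sum_congr rfl fun i _ => by ring, hφ, mul_one] at this
      exact this.symm
    have hc : c = 0 := by
      calc c = c * (conj (σ 0) * σ 0 + conj (σ 1) * σ 1) := by rw [hσ2, mul_one]
        _ = conj (σ 0) * (c * σ 0) + conj (σ 1) * (c * σ 1) := by ring
        _ = 0 := by rw [h1, h2]; ring
    rw [hc, zero_smul]
    exact Submodule.zero_mem ⊥
  have hsum := Submodule.finrank_sup_add_finrank_inf_eq (Submodule.span ℂ {x})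
    (Submodule.map L (LinearMap.ker f))
  rw [hdisj, finrank_bot, finrank_span_singleton hxne, hmaprank] at hsum
  omega
end

section
/- Let φ₁, φ₂ ∈ ℂ^n be linearly independent and not proportional, and set x = φ₁ ⊕ φ₂ ∈ ℂ^{2n}. If y = ψ₁ ⊕ ψ₂ satisfies ⟨y, Φ_n(|x⟩⟨x|) y⟩ = 0, then ψ₁, ψ₂ ∈ span{φ₁, φ₂}. -/
open scoped ComplexOrder

open ComplexConjugate

namespace PhiAux

variable {n : ℕ}

noncomputable def ip (a b : Fin n → ℂ) : ℂ := ∑ i, conj (a i) * b i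

lemma ip_conj (a b : Fin n → ℂ) : conj (ip a b) = ip b a := by
  simp [ip, map_sum, mul_comm]

lemma ip_add_right (a b c : Fin n → ℂ) : ip a (b + c) = ip a b + ip a c := by
  simp [ip, mul_add, Finset.sum_add_distrib]

lemma ip_sub_right (a b c : Fin n → ℂ) : ip a (b - c) = ip a b - ip a c := by
  simp [ip, mul_sub, Finset.sum_sub_distrib]

lemma ip_smul_right (r : ℂ) (a b : Fin n → ℂ) : ip a (r • b) = r * ip a b := by
  simp only [ip, Pi.smul_apply, smul_eq_mul, Finset.mul_sum]
  exact Finset.sum_congr rfl fun j _ => by ring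

lemma ip_neg_right (a b : Fin n → ℂ) : ip a (-b) = -ip a b := by
  simp [ip]

lemma ip_add_left (a b c : Fin n → ℂ) : ip (a + b) c = ip a c + ip b c := by
  simp [ip, add_mul, Finset.sum_add_distrib]

lemma ip_sub_left (a b c : Fin n → ℂ) : ip (a - b) c = ip a c - ip b c := by
  simp [ip, sub_mul, Finset.sum_sub_distrib]

lemma ip_smul_left (r : ℂ) (a b : Fin n → ℂ) : ip (r • a) b = conj r * ip a b := by
  simp only [ip, Pi.smul_apply, smul_eq_mul, map_mul, Finset.mul_sum]
  exact Finset.sum_congr rfl fun j _ => by ring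

lemma ip_neg_left (a b : Fin n → ℂ) : ip (-a) b = -ip a b := by
  simp [ip]

lemma ip_self (a : Fin n → ℂ) : ip a a = ((∑ i, Complex.normSq (a i) : ℝ) : ℂ) := by
  simp [ip, Complex.normSq_eq_conj_mul_self]

lemma eq_zero_of_sum_normSq (a : Fin n → ℂ) (h : (∑ i, Complex.normSq (a i) : ℝ) = 0) :
    a = 0 := by
  funext i
  have := (Finset.sum_eq_zero_iff_of_nonneg (fun i _ => Complex.normSq_nonneg (a i))).1 h i
    (Finset.mem_univ i)
  simpa [Complex.normSq_eq_zero] using this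

lemma trace_vecMulVec_star (u v : Fin n → ℂ) :
    (Matrix.vecMulVec u (star v)).trace = ip v u := by
  simp [Matrix.trace, Matrix.diag, Matrix.vecMulVec_apply, ip, mul_comm]

lemma vecMulVec_star_mulVec (u v w : Fin n → ℂ) :
    Matrix.mulVec (Matrix.vecMulVec u (star v)) w = (ip v w) • u := by
  funext i
  simp only [Matrix.mulVec, Matrix.vecMulVec_apply, dotProduct, ip, Pi.smul_apply,
    smul_eq_mul, Finset.sum_mul, Pi.star_apply]
  exact Finset.sum_congr rfl fun j _ => by simp [RCLike.star_def]; ring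

lemma sum_conj_mul_const (c : ℂ) (a b : Fin n → ℂ) :
    ∑ i, conj (a i) * (c * b i) = c * ip a b := by
  simp only [ip, Finset.mul_sum]
  exact Finset.sum_congr rfl fun j _ => by ring

/-- The grand sum-of-squares identity. -/
lemma main_identity (φ₁ φ₂ ψ₁ ψ₂ : Fin n → ℂ) :
    (ip φ₁ φ₁ * ip φ₂ φ₂ - ip φ₁ φ₂ * ip φ₂ φ₁) * ip φ₂ φ₂ *
      (ip ψ₁ (ip φ₂ φ₂ • ψ₁ + (-(ip φ₂ ψ₂ • φ₁) - (ip φ₁ φ₂ • ψ₂ - ip φ₁ ψ₂ • φ₂)))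
        + ip ψ₂ ((-(ip φ₁ ψ₁ • φ₂) - (ip φ₂ φ₁ • ψ₁ - ip φ₂ ψ₁ • φ₁)) + ip φ₁ φ₁ • ψ₂))
    = (ip φ₁ φ₁ * ip φ₂ φ₂ - ip φ₁ φ₂ * ip φ₂ φ₁) *
        ip (ip φ₂ φ₂ • ψ₁ + (-(ip φ₂ ψ₂ • φ₁) - (ip φ₁ φ₂ • ψ₂ - ip φ₁ ψ₂ • φ₂)))
           (ip φ₂ φ₂ • ψ₁ + (-(ip φ₂ ψ₂ • φ₁) - (ip φ₁ φ₂ • ψ₂ - ip φ₁ ψ₂ • φ₂)))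
      + ip ((ip φ₁ φ₁ * ip φ₂ φ₂ - ip φ₁ φ₂ * ip φ₂ φ₁) • ψ₂
              - (ip φ₂ φ₂ * ip φ₁ ψ₂ - ip φ₁ φ₂ * ip φ₂ ψ₂) • φ₁
              - (ip φ₁ φ₁ * ip φ₂ ψ₂ - ip φ₂ φ₁ * ip φ₁ ψ₂) • φ₂)
           ((ip φ₁ φ₁ * ip φ₂ φ₂ - ip φ₁ φ₂ * ip φ₂ φ₁) • ψ₂
              - (ip φ₂ φ₂ * ip φ₁ ψ₂ - ip φ₁ φ₂ * ip φ₂ ψ₂) • φ₁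
              - (ip φ₁ φ₁ * ip φ₂ ψ₂ - ip φ₂ φ₁ * ip φ₁ ψ₂) • φ₂) := by
  simp only [ip_add_right, ip_add_left, ip_sub_right, ip_sub_left, ip_smul_right,
    ip_smul_left, ip_neg_right, ip_neg_left, map_mul, map_sub, map_neg, ip_conj]
  ring

lemma cs_identity (φ₁ φ₂ : Fin n → ℂ) :
    ip (ip φ₁ φ₁ • φ₂ - ip φ₁ φ₂ • φ₁) (ip φ₁ φ₁ • φ₂ - ip φ₁ φ₂ • φ₁)
      = ip φ₁ φ₁ * (ip φ₁ φ₁ * ip φ₂ φ₂ - ip φ₁ φ₂ * ip φ₂ φ₁) := by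
  simp only [ip_sub_right, ip_sub_left, ip_smul_right, ip_smul_left, map_mul, map_sub,
    map_neg, ip_conj]
  ring

end PhiAux

open PhiAux in
/-- If `φ₁, φ₂` are linearly independent (hence not proportional),
`x = φ₁ ⊕ φ₂`, and `y = ψ₁ ⊕ ψ₂` satisfies `⟨y, Φ_n(|x⟩⟨x|) y⟩ = 0`, then
`ψ₁, ψ₂ ∈ span{φ₁, φ₂}`. -/
theorem Phi_kernel_component_span (n : ℕ) (hn : 2 ≤ n)
    (φ₁ φ₂ : Fin n → ℂ) (hind : LinearIndependent ℂ ![φ₁, φ₂])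
    (ψ₁ ψ₂ : Fin n → ℂ)
    (h0 : (∑ i : Fin n ⊕ Fin n,
        conj (Sum.elim ψ₁ ψ₂ i) *
          (Phi n (Matrix.vecMulVec (Sum.elim φ₁ φ₂)
            (star (Sum.elim φ₁ φ₂)))).mulVec (Sum.elim ψ₁ ψ₂) i) = 0) :
    ψ₁ ∈ Submodule.span ℂ {φ₁, φ₂} ∧ ψ₂ ∈ Submodule.span ℂ {φ₁, φ₂} := by
  classical
  have hφ₁ : φ₁ ≠ 0 := by simpa using hind.ne_zero 0
  have hφ₂ : φ₂ ≠ 0 := by simpa using hind.ne_zero 1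
  have hn0 : (n : ℂ) ≠ 0 := by
    exact_mod_cast Nat.cast_ne_zero.2 (by omega)
  -- block decomposition of the rank-one projector
  have hM : Matrix.vecMulVec (Sum.elim φ₁ φ₂) (star (Sum.elim φ₁ φ₂)) =
      Matrix.fromBlocks (Matrix.vecMulVec φ₁ (star φ₁)) (Matrix.vecMulVec φ₁ (star φ₂))
        (Matrix.vecMulVec φ₂ (star φ₁)) (Matrix.vecMulVec φ₂ (star φ₂)) := by
    ext i j
    cases i <;> cases j <;>
      simp [Matrix.vecMulVec_apply, Matrix.fromBlocks]
  set V₁ : Fin n → ℂ :=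
    ip φ₂ φ₂ • ψ₁ + (-(ip φ₂ ψ₂ • φ₁) - (ip φ₁ φ₂ • ψ₂ - ip φ₁ ψ₂ • φ₂)) with hV₁def
  set V₂ : Fin n → ℂ :=
    (-(ip φ₁ ψ₁ • φ₂) - (ip φ₂ φ₁ • ψ₁ - ip φ₂ ψ₁ • φ₁)) + ip φ₁ φ₁ • ψ₂ with hV₂def
  have key : (Phi n (Matrix.vecMulVec (Sum.elim φ₁ φ₂)
      (star (Sum.elim φ₁ φ₂)))).mulVec (Sum.elim ψ₁ ψ₂)
      = (n : ℂ)⁻¹ • Sum.elim V₁ V₂ := by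
    rw [hM]
    unfold Phi Rmap
    simp only [Matrix.toBlocks_fromBlocks₁₁, Matrix.toBlocks_fromBlocks₁₂,
      Matrix.toBlocks_fromBlocks₂₁, Matrix.toBlocks_fromBlocks₂₂, trace_vecMulVec_star]
    rw [Matrix.smul_mulVec, Matrix.fromBlocks_mulVec]
    congr 1
    simp only [Sum.elim_comp_inl, Sum.elim_comp_inr, Matrix.sub_mulVec, Matrix.neg_mulVec,
      Matrix.smul_mulVec, Matrix.one_mulVec, vecMulVec_star_mulVec, hV₁def, hV₂def]
  rw [key] at h0
  rw [Fintype.sum_sum_type] at h0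
  simp only [Sum.elim_inl, Sum.elim_inr, Pi.smul_apply, smul_eq_mul] at h0
  rw [sum_conj_mul_const, sum_conj_mul_const] at h0
  have hE : ip ψ₁ V₁ + ip ψ₂ V₂ = 0 := by
    have h' : (n : ℂ)⁻¹ * (ip ψ₁ V₁ + ip ψ₂ V₂) = 0 := by rw [mul_add]; exact h0
    rcases mul_eq_zero.1 h' with h | h
    · exact absurd h (inv_ne_zero hn0)
    · exact h
  -- scalar abbreviations
  set Gc : ℂ := ip φ₁ φ₁ * ip φ₂ φ₂ - ip φ₁ φ₂ * ip φ₂ φ₁ with hGcdef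
  set w : Fin n → ℂ := Gc • ψ₂
      - (ip φ₂ φ₂ * ip φ₁ ψ₂ - ip φ₁ φ₂ * ip φ₂ ψ₂) • φ₁
      - (ip φ₁ φ₁ * ip φ₂ ψ₂ - ip φ₂ φ₁ * ip φ₁ ψ₂) • φ₂ with hwdef
  have hz : Gc * ip V₁ V₁ + ip w w = 0 := by
    have := main_identity φ₁ φ₂ ψ₁ ψ₂
    rw [← hV₁def, ← hV₂def, ← hGcdef] at this
    rw [← this, hE, mul_zero]
  -- real quantities
  set g : ℝ := (∑ i, Complex.normSq (φ₁ i)) * (∑ i, Complex.normSq (φ₂ i))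
      - Complex.normSq (ip φ₁ φ₂) with hgdef
  have hGc : Gc = (g : ℂ) := by
    rw [hGcdef, ← ip_conj φ₁ φ₂, Complex.mul_conj, ip_self, ip_self, hgdef]
    push_cast
    ring
  -- strict Cauchy-Schwarz: g > 0
  have hr1pos : 0 < ∑ i, Complex.normSq (φ₁ i) := by
    rcases (Finset.sum_nonneg (fun i _ => Complex.normSq_nonneg (φ₁ i))).lt_or_eq with h | h
    · exact h
    · exact absurd (eq_zero_of_sum_normSq φ₁ h.symm) hφ₁
  have hgpos : 0 < g := by
    set z : Fin n → ℂ := ip φ₁ φ₁ • φ₂ - ip φ₁ φ₂ • φ₁ with hzdef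
    have hz0 : z ≠ 0 := by
      intro h
      have hrel : (-(ip φ₁ φ₂)) • φ₁ + ip φ₁ φ₁ • φ₂ = 0 := by
        rw [hzdef] at h
        have := sub_eq_zero.1 h
        rw [neg_smul]
        rw [← this]; abel
      have := (LinearIndependent.pair_iff.1 hind _ _ hrel).2
      rw [ip_self] at this
      exact hr1pos.ne' (by exact_mod_cast this)
    have hcs := cs_identity φ₁ φ₂
    rw [← hzdef, ← hGcdef, hGc, ip_self, ip_self] at hcs
    have hre : (∑ i, Complex.normSq (z i)) = (∑ i, Complex.normSq (φ₁ i)) * g := by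
      exact_mod_cast hcs
    have hzpos : 0 < ∑ i, Complex.normSq (z i) := by
      rcases (Finset.sum_nonneg (fun i _ => Complex.normSq_nonneg (z i))).lt_or_eq with h | h
      · exact h
      · exact absurd (eq_zero_of_sum_normSq z h.symm) hz0
    nlinarith [hzpos, hr1pos, hre]
  -- conclude both squares vanish
  have hzr : g * (∑ i, Complex.normSq (V₁ i)) + (∑ i, Complex.normSq (w i)) = 0 := by
    have hcast : ((g * (∑ i, Complex.normSq (V₁ i)) + (∑ i, Complex.normSq (w i)) : ℝ) : ℂ)
        = Gc * ip V₁ V₁ + ip w w := by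
      rw [hGc, ip_self, ip_self]
      push_cast
      ring
    have : ((g * (∑ i, Complex.normSq (V₁ i)) + (∑ i, Complex.normSq (w i)) : ℝ) : ℂ) = 0 := by
      rw [hcast]; exact hz
    exact_mod_cast this
  have hV1nn : 0 ≤ ∑ i, Complex.normSq (V₁ i) :=
    Finset.sum_nonneg (fun i _ => Complex.normSq_nonneg _)
  have hwnn : 0 ≤ ∑ i, Complex.normSq (w i) :=
    Finset.sum_nonneg (fun i _ => Complex.normSq_nonneg _)
  have hV1z : V₁ = 0 := by
    apply eq_zero_of_sum_normSq
    nlinarith [hgpos, hV1nn, hwnn, hzr]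
  have hwz : w = 0 := by
    apply eq_zero_of_sum_normSq
    nlinarith [hgpos, hV1nn, hwnn, hzr]
  -- extract span membership for ψ₂
  have hmem1 : φ₁ ∈ Submodule.span ℂ ({φ₁, φ₂} : Set (Fin n → ℂ)) :=
    Submodule.subset_span (Set.mem_insert _ _)
  have hmem2 : φ₂ ∈ Submodule.span ℂ ({φ₁, φ₂} : Set (Fin n → ℂ)) :=
    Submodule.subset_span (Set.mem_insert_of_mem _ rfl)
  have hGc0 : Gc ≠ 0 := by
    rw [hGc]
    exact_mod_cast hgpos.ne'
  have hψ₂mem : ψ₂ ∈ Submodule.span ℂ ({φ₁, φ₂} : Set (Fin n → ℂ)) := by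
    have heq : Gc • ψ₂ = (ip φ₂ φ₂ * ip φ₁ ψ₂ - ip φ₁ φ₂ * ip φ₂ ψ₂) • φ₁
        + (ip φ₁ φ₁ * ip φ₂ ψ₂ - ip φ₂ φ₁ * ip φ₁ ψ₂) • φ₂ := by
      rw [hwdef] at hwz
      have h2 : Gc • ψ₂ - ((ip φ₂ φ₂ * ip φ₁ ψ₂ - ip φ₁ φ₂ * ip φ₂ ψ₂) • φ₁
          + (ip φ₁ φ₁ * ip φ₂ ψ₂ - ip φ₂ φ₁ * ip φ₁ ψ₂) • φ₂) = 0 := by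
        rw [← sub_sub]; exact hwz
      exact sub_eq_zero.1 h2
    have : ψ₂ = Gc⁻¹ • (Gc • ψ₂) := by
      rw [smul_smul, inv_mul_cancel₀ hGc0, one_smul]
    rw [this, heq]
    exact Submodule.smul_mem _ _ (Submodule.add_mem _ (Submodule.smul_mem _ _ hmem1)
      (Submodule.smul_mem _ _ hmem2))
  -- extract span membership for ψ₁
  have hr2pos : 0 < ∑ i, Complex.normSq (φ₂ i) := by
    rcases (Finset.sum_nonneg (fun i _ => Complex.normSq_nonneg (φ₂ i))).lt_or_eq with h | h
    · exact h
    · exact absurd (eq_zero_of_sum_normSq φ₂ h.symm) hφ₂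
  have ht₂0 : ip φ₂ φ₂ ≠ 0 := by
    rw [ip_self]
    exact_mod_cast hr2pos.ne'
  have hψ₁mem : ψ₁ ∈ Submodule.span ℂ ({φ₁, φ₂} : Set (Fin n → ℂ)) := by
    have heq : ip φ₂ φ₂ • ψ₁
        = -(-(ip φ₂ ψ₂ • φ₁) - (ip φ₁ φ₂ • ψ₂ - ip φ₁ ψ₂ • φ₂)) := by
      rw [← add_eq_zero_iff_eq_neg]
      exact hV1z
    have : ψ₁ = (ip φ₂ φ₂)⁻¹ • (ip φ₂ φ₂ • ψ₁) := by
      rw [smul_smul, inv_mul_cancel₀ ht₂0, one_smul]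
    rw [this, heq]
    refine Submodule.smul_mem _ _ (Submodule.neg_mem _ (Submodule.sub_mem _
      (Submodule.neg_mem _ (Submodule.smul_mem _ _ hmem1))
      (Submodule.sub_mem _ (Submodule.smul_mem _ _ hψ₂mem)
        (Submodule.smul_mem _ _ hmem2))))
  exact ⟨hψ₁mem, hψ₂mem⟩
end

section
/- Let N = span{ x̄ ⊗ x ⊗ y ∈ (ℂ^{2n})^{⊗3} : x, y ∈ ℂ^{2n}, Φ_n(|x⟩⟨x|) y = 0 }. Then dim N = 2n(4n² − 1), i.e., N has codimension 2n in (ℂ^{2n})^{⊗3}. -/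
open scoped ComplexOrder

open ComplexConjugate

set_option linter.unusedSectionVars false
set_option maxHeartbeats 1600000

lemma five_coeffs (c1 c2 c3 c4 c5 : ℂ)
    (h : ∀ t : ℂ, c1 * t + c2 * conj t + c3 * t ^ 2 + c4 * (conj t) ^ 2
        + c5 * (t * conj t) = 0) :
    c1 = 0 ∧ c2 = 0 ∧ c3 = 0 ∧ c4 = 0 ∧ c5 = 0 := by
  have h1 := h 1
  have h2 := h (-1)
  have h3 := h Complex.I
  have h4 := h (-Complex.I)
  have h5 := h (1 + Complex.I)
  simp only [map_one, map_neg, map_add, Complex.conj_I] at h1 h2 h3 h4 h5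
  have e1 : c1 + c2 = 0 := by linear_combination (h1 - h2) / 2
  have e2 : c3 + c4 + c5 = 0 := by linear_combination (h1 + h2) / 2
  have e3 : c3 + c4 - c5 = 0 := by
    linear_combination (-1/2 : ℂ) * h3 + (-1/2 : ℂ) * h4 + (c3 + c4 - c5) * Complex.I_sq
  have e4 : c1 - c2 = 0 := by
    linear_combination (Complex.I/2) * h4 - (Complex.I/2) * h3 + (c1 - c2) * Complex.I_sq
  have hc1 : c1 = 0 := by linear_combination (e1 + e4) / 2
  have hc2 : c2 = 0 := by linear_combination (e1 - e4) / 2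
  have hc5 : c5 = 0 := by linear_combination (e2 - e3) / 2
  have hc34 : c3 + c4 = 0 := by linear_combination (e2 + e3) / 2
  have e5 : c3 - c4 = 0 := by
    linear_combination (-Complex.I/2) * h5 + (Complex.I/2) * (1+Complex.I) * hc1
      + (Complex.I/2) * (1-Complex.I) * hc2 + (Complex.I/2) * (1 - Complex.I^2) * hc5
      + (Complex.I/2) * (1 + Complex.I^2) * hc34 + (c3 - c4) * Complex.I_sq
  exact ⟨hc1, hc2, by linear_combination (hc34 + e5)/2, by linear_combination (hc34 - e5)/2, hc5⟩


variable {ι : Type*} [Fintype ι] [DecidableEq ι]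

noncomputable def tri (T : ι → ι → ι → ℂ) (x y z : ι → ℂ) : ℂ :=
  ∑ i, ∑ j, ∑ k, x i * y j * z k * T i j k

lemma tri_add₁ (T : ι → ι → ι → ℂ) (x x' y z : ι → ℂ) :
    tri T (fun i => x i + x' i) y z = tri T x y z + tri T x' y z := by
  simp only [tri, ← Finset.sum_add_distrib]
  refine Finset.sum_congr rfl fun i _ => Finset.sum_congr rfl fun j _ =>
    Finset.sum_congr rfl fun k _ => by ring

lemma tri_add₂ (T : ι → ι → ι → ℂ) (x y y' z : ι → ℂ) :
    tri T x (fun i => y i + y' i) z = tri T x y z + tri T x y' z := by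
  simp only [tri, ← Finset.sum_add_distrib]
  refine Finset.sum_congr rfl fun i _ => Finset.sum_congr rfl fun j _ =>
    Finset.sum_congr rfl fun k _ => by ring

lemma tri_add₃ (T : ι → ι → ι → ℂ) (x y z z' : ι → ℂ) :
    tri T x y (fun i => z i + z' i) = tri T x y z + tri T x y z' := by
  simp only [tri, ← Finset.sum_add_distrib]
  refine Finset.sum_congr rfl fun i _ => Finset.sum_congr rfl fun j _ =>
    Finset.sum_congr rfl fun k _ => by ring

lemma tri_smul₁ (T : ι → ι → ι → ℂ) (c : ℂ) (x y z : ι → ℂ) :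
    tri T (fun i => c * x i) y z = c * tri T x y z := by
  simp only [tri, Finset.mul_sum]
  refine Finset.sum_congr rfl fun i _ => ?_
  refine Finset.sum_congr rfl fun j _ => Finset.sum_congr rfl fun k _ => by ring

lemma tri_smul₂ (T : ι → ι → ι → ℂ) (c : ℂ) (x y z : ι → ℂ) :
    tri T x (fun i => c * y i) z = c * tri T x y z := by
  simp only [tri, Finset.mul_sum]
  refine Finset.sum_congr rfl fun i _ => ?_
  refine Finset.sum_congr rfl fun j _ => Finset.sum_congr rfl fun k _ => by ring

lemma tri_smul₃ (T : ι → ι → ι → ℂ) (c : ℂ) (x y z : ι → ℂ) :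
    tri T x y (fun i => c * z i) = c * tri T x y z := by
  simp only [tri, Finset.mul_sum]
  refine Finset.sum_congr rfl fun i _ => ?_
  refine Finset.sum_congr rfl fun j _ => Finset.sum_congr rfl fun k _ => by ring

lemma tri_single (T : ι → ι → ι → ℂ) (i j k : ι) :
    tri T (Pi.single i 1) (Pi.single j 1) (Pi.single k 1) = T i j k := by
  simp [tri, Pi.single_apply, ite_mul, zero_mul, one_mul,
    Finset.sum_ite_eq', Finset.mem_univ]

lemma tri_zero (T : ι → ι → ι → ℂ) (hT : ∀ i j k, T i j k = 0) (x y z : ι → ℂ) :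
    tri T x y z = 0 := by
  simp only [tri]
  refine Finset.sum_eq_zero fun i _ => Finset.sum_eq_zero fun j _ =>
    Finset.sum_eq_zero fun k _ => by rw [hT]; ring

lemma conj_single (i : ι) :
    (fun r => conj ((Pi.single i 1 : ι → ℂ) r)) = (Pi.single i 1 : ι → ℂ) := by
  funext r
  simp [Pi.single_apply, apply_ite (starRingEnd ℂ)]

lemma conj_add_smul (y z : ι → ℂ) (t : ℂ) :
    (fun i => conj (y i + t * z i)) = fun i => conj (y i) + conj t * conj (z i) := by
  funext i; rw [map_add, map_mul]

lemma cubic21 (T : ι → ι → ι → ℂ)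
    (h : ∀ x : ι → ℂ, tri T (fun i => conj (x i)) x x = 0) :
    ∀ i j k, T i j k + T i k j = 0 := by
  have key : ∀ y z : ι → ℂ, tri T (fun i => conj (y i)) z z = 0 := by
    intro y z
    have five := five_coeffs
      (tri T (fun i => conj (y i)) z y + tri T (fun i => conj (y i)) y z)
      (tri T (fun i => conj (z i)) y y)
      (tri T (fun i => conj (y i)) z z)
      0
      (tri T (fun i => conj (z i)) z y + tri T (fun i => conj (z i)) y z)
      ?_
    · exact five.2.2.1
    intro t
    have h0 := h (fun i => y i + t * z i)
    rw [conj_add_smul, tri_add₁, tri_smul₁, tri_add₂, tri_add₂, tri_smul₂, tri_smul₂,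
      tri_add₃, tri_add₃, tri_add₃, tri_add₃, tri_smul₃, tri_smul₃, tri_smul₃, tri_smul₃] at h0
    linear_combination h0 - h y - conj t * t^2 * h z
  have key2 : ∀ y z w : ι → ℂ,
      tri T (fun i => conj (y i)) z w + tri T (fun i => conj (y i)) w z = 0 := by
    intro y z w
    have h0 := key y (fun i => z i + w i)
    rw [tri_add₂, tri_add₃, tri_add₃] at h0
    linear_combination h0 - key y z - key y w
  intro i j k
  have h0 := key2 (Pi.single i 1) (Pi.single j 1) (Pi.single k 1)
  rwa [conj_single, tri_single, tri_single] at h0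

lemma cubic12 (T : ι → ι → ι → ℂ)
    (h : ∀ x : ι → ℂ, tri T (fun i => conj (x i)) (fun i => conj (x i)) x = 0) :
    ∀ i j k, T i j k + T j i k = 0 := by
  have key : ∀ z y : ι → ℂ, tri T (fun i => conj (z i)) (fun i => conj (z i)) y = 0 := by
    intro z y
    have five := five_coeffs
      (tri T (fun i => conj (y i)) (fun i => conj (y i)) z)
      (tri T (fun i => conj (y i)) (fun i => conj (z i)) y
        + tri T (fun i => conj (z i)) (fun i => conj (y i)) y)
      0
      (tri T (fun i => conj (z i)) (fun i => conj (z i)) y)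
      (tri T (fun i => conj (y i)) (fun i => conj (z i)) z
        + tri T (fun i => conj (z i)) (fun i => conj (y i)) z)
      ?_
    · exact five.2.2.2.1
    intro t
    have h0 := h (fun i => y i + t * z i)
    rw [conj_add_smul, tri_add₁, tri_smul₁, tri_add₂, tri_add₂, tri_smul₂, tri_smul₂,
      tri_add₃, tri_add₃, tri_add₃, tri_add₃, tri_smul₃, tri_smul₃, tri_smul₃, tri_smul₃] at h0
    linear_combination h0 - h y - conj t * (conj t * t) * h z
  have key2 : ∀ z w y : ι → ℂ,
      tri T (fun i => conj (z i)) (fun i => conj (w i)) y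
        + tri T (fun i => conj (w i)) (fun i => conj (z i)) y = 0 := by
    intro z w y
    have h0 := key (fun i => z i + w i) y
    have hc : (fun i => conj (z i + w i)) = fun i => conj (z i) + conj (w i) := by
      funext i; rw [map_add]
    rw [hc, tri_add₁, tri_add₂, tri_add₂] at h0
    linear_combination h0 - key z y - key w y
  intro i j k
  have h0 := key2 (Pi.single i 1) (Pi.single j 1) (Pi.single k 1)
  rwa [conj_single, conj_single, tri_single, tri_single] at h0

noncomputable def bil (M : ι → ι → ℂ) (x y : ι → ℂ) : ℂ :=
  ∑ i, ∑ j, x i * y j * M i j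

lemma bil_add₁ (M : ι → ι → ℂ) (x x' y : ι → ℂ) :
    bil M (fun i => x i + x' i) y = bil M x y + bil M x' y := by
  simp only [bil, ← Finset.sum_add_distrib]
  refine Finset.sum_congr rfl fun i _ => Finset.sum_congr rfl fun j _ => by ring

lemma bil_add₂ (M : ι → ι → ℂ) (x y y' : ι → ℂ) :
    bil M x (fun i => y i + y' i) = bil M x y + bil M x y' := by
  simp only [bil, ← Finset.sum_add_distrib]
  refine Finset.sum_congr rfl fun i _ => Finset.sum_congr rfl fun j _ => by ring

lemma bil_smul₁ (M : ι → ι → ℂ) (c : ℂ) (x y : ι → ℂ) :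
    bil M (fun i => c * x i) y = c * bil M x y := by
  simp only [bil, Finset.mul_sum]
  refine Finset.sum_congr rfl fun i _ => Finset.sum_congr rfl fun j _ => by ring

lemma bil_smul₂ (M : ι → ι → ℂ) (c : ℂ) (x y : ι → ℂ) :
    bil M x (fun i => c * y i) = c * bil M x y := by
  simp only [bil, Finset.mul_sum]
  refine Finset.sum_congr rfl fun i _ => Finset.sum_congr rfl fun j _ => by ring

lemma bil_single (M : ι → ι → ℂ) (i j : ι) :
    bil M (Pi.single i 1) (Pi.single j 1) = M i j := by
  simp [bil, Pi.single_apply, ite_mul, zero_mul, one_mul,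
    Finset.sum_ite_eq', Finset.mem_univ]

lemma sesq (M : ι → ι → ℂ) (h : ∀ a : ι → ℂ, bil M (fun i => conj (a i)) a = 0) :
    ∀ i j, M i j = 0 := by
  have key : ∀ y z : ι → ℂ, bil M (fun i => conj (y i)) z = 0 := by
    intro y z
    have five := five_coeffs
      (bil M (fun i => conj (y i)) z)
      (bil M (fun i => conj (z i)) y)
      0 0
      (bil M (fun i => conj (z i)) z)
      ?_
    · exact five.1
    intro t
    have h0 := h (fun i => y i + t * z i)
    rw [conj_add_smul, bil_add₁, bil_smul₁, bil_add₂, bil_add₂, bil_smul₂, bil_smul₂] at h0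
    linear_combination h0 - h y
  intro i j
  have h0 := key (Pi.single i 1) (Pi.single j 1)
  rwa [conj_single, bil_single] at h0

/-- The structure lemma coming from the hyperplane condition. -/
lemma pipeline {m : ℕ} (hm : 2 ≤ m) (X : Fin m → Fin m → Fin m → ℂ)
    (h : ∀ a u : Fin m → ℂ, (∑ r, conj (a r) * u r) = 0 →
      tri X (fun t => conj (a t)) a u = 0) :
    ∀ t t' k, X t t' k = if t = k then X ⟨0, by omega⟩ t' ⟨0, by omega⟩ else 0 := by
  set p0 : Fin m := ⟨0, by omega⟩ with hp0
  -- Step 1: pairwise identity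
  have step1 : ∀ (a : Fin m → ℂ) (k l : Fin m),
      conj (a l) * tri X (fun t => conj (a t)) a (Pi.single k 1)
        - conj (a k) * tri X (fun t => conj (a t)) a (Pi.single l 1) = 0 := by
    intro a k l
    have hu : (∑ r, conj (a r) *
        ((fun r => conj (a l) * (Pi.single k 1 : Fin m → ℂ) r
          + (-(conj (a k))) * (Pi.single l 1 : Fin m → ℂ) r) r)) = 0 := by
      have hsummand : ∀ r, conj (a r) *
          ((fun r => conj (a l) * (Pi.single k 1 : Fin m → ℂ) r
            + (-(conj (a k))) * (Pi.single l 1 : Fin m → ℂ) r) r)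
          = (if r = k then conj (a k) * conj (a l) else 0)
            - (if r = l then conj (a l) * conj (a k) else 0) := by
        intro r
        by_cases hk : r = k
        · by_cases hl : r = l
          · have hkl : k = l := by rw [← hk, hl]
            subst hkl
            simp [hk, Pi.single_apply]
          · have hkl : ¬ k = l := fun hh => hl (hk.trans hh)
            simp [Pi.single_apply, hk, hl, if_neg hkl]
        · by_cases hl : r = l
          · have hkl : ¬ l = k := fun hh => hk (hl.trans hh)
            simp [Pi.single_apply, hk, hl, if_neg hkl]
          · simp [Pi.single_apply, hk, hl]
      rw [Finset.sum_congr rfl fun r _ => hsummand r, Finset.sum_sub_distrib,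
        Finset.sum_ite_eq' Finset.univ k, Finset.sum_ite_eq' Finset.univ l]
      simp only [Finset.mem_univ, if_true]
      ring
    have h0 := h a _ hu
    rw [tri_add₃, tri_smul₃, tri_smul₃] at h0
    linear_combination h0
  -- Step 2: antisymmetrized identity via cubic12
  have step2 : ∀ (k l t s t' : Fin m),
      X t t' k * (if s = l then (1:ℂ) else 0) - X t t' l * (if s = k then (1:ℂ) else 0)
      + (X s t' k * (if t = l then (1:ℂ) else 0) - X s t' l * (if t = k then (1:ℂ) else 0)) = 0 := by
    intro k l
    have hcube := cubic12 (fun t s t' =>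
      X t t' k * (if s = l then (1:ℂ) else 0) - X t t' l * (if s = k then (1:ℂ) else 0)) ?_
    · intro t s t'; exact hcube t s t'
    intro x
    have expand : tri (fun t s t' =>
        X t t' k * (if s = l then (1:ℂ) else 0) - X t t' l * (if s = k then (1:ℂ) else 0))
        (fun i => conj (x i)) (fun i => conj (x i)) x
        = conj (x l) * tri X (fun t => conj (x t)) x (Pi.single k 1)
          - conj (x k) * tri X (fun t => conj (x t)) x (Pi.single l 1) := by
      have tsing : ∀ (kk : Fin m), tri X (fun t => conj (x t)) x (Pi.single kk 1)
          = ∑ t, ∑ t', conj (x t) * x t' * X t t' kk := by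
        intro kk
        simp only [tri, Pi.single_apply]
        refine Finset.sum_congr rfl fun t _ => Finset.sum_congr rfl fun t' _ => ?_
        simp [mul_ite, ite_mul, zero_mul, mul_zero, Finset.sum_ite_eq', Finset.mem_univ]
      rw [tsing, tsing]
      simp only [tri]
      rw [Finset.mul_sum, Finset.mul_sum, ← Finset.sum_sub_distrib]
      refine Finset.sum_congr rfl fun t _ => ?_
      rw [Finset.sum_comm, Finset.mul_sum, Finset.mul_sum, ← Finset.sum_sub_distrib]
      refine Finset.sum_congr rfl fun t' _ => ?_
      simp only [mul_sub, mul_ite, ite_mul, zero_mul, mul_zero, mul_one,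
        Finset.sum_sub_distrib]
      rw [Finset.sum_ite_eq' Finset.univ l, Finset.sum_ite_eq' Finset.univ k]
      simp only [Finset.mem_univ, if_true]
      ring
    rw [expand]
    exact step1 x k l
  -- Step 3: off-diagonal vanishing
  have offdiag : ∀ t t' k, t ≠ k → X t t' k = 0 := by
    intro t t' k htk
    have h0 := step2 k t t t t'
    simp only [eq_self_iff_true, if_true, if_neg htk] at h0
    linear_combination h0 / 2
  have diag : ∀ t t', X t t' t = X p0 t' p0 := by
    intro t t'
    by_cases htp0 : t = p0
    · subst htp0; rfl
    · have h0 := step2 t p0 t p0 t'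
      simp only [eq_self_iff_true, if_true, if_neg htp0,
        if_neg (fun h : p0 = t => htp0 h.symm)] at h0
      linear_combination h0
  intro t t' k
  by_cases htk : t = k
  · subst htk; rw [if_pos rfl]; exact diag t t'
  · rw [if_neg htk]; exact offdiag t t' k htk

noncomputable def rhsFun (n : ℕ) (x y : Fin n ⊕ Fin n → ℂ) : Fin n ⊕ Fin n → ℂ :=
  Sum.elim
    (fun s => (∑ t, x (Sum.inr t) * conj (x (Sum.inr t))) * y (Sum.inl s)
      - x (Sum.inl s) * (∑ t, conj (x (Sum.inr t)) * y (Sum.inr t))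
      - (∑ t, x (Sum.inr t) * conj (x (Sum.inl t))) * y (Sum.inr s)
      + x (Sum.inr s) * (∑ t, conj (x (Sum.inl t)) * y (Sum.inr t)))
    (fun s => (∑ t, x (Sum.inl t) * conj (x (Sum.inl t))) * y (Sum.inr s)
      - x (Sum.inr s) * (∑ t, conj (x (Sum.inl t)) * y (Sum.inl t))
      - (∑ t, x (Sum.inl t) * conj (x (Sum.inr t))) * y (Sum.inl s)
      + x (Sum.inl s) * (∑ t, conj (x (Sum.inr t)) * y (Sum.inl t)))

lemma phi_mulVec_eq (n : ℕ) (x y : Fin n ⊕ Fin n → ℂ) :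
    (Phi n (Matrix.vecMulVec x (star x))).mulVec y = (n:ℂ)⁻¹ • rhsFun n x y := by
  rw [Phi, Matrix.smul_mulVec]
  congr 1
  funext i
  show ∑ j, _ * y j = _
  cases i with
  | inl s =>
    rw [Fintype.sum_sum_type]
    simp only [Matrix.fromBlocks_apply₁₁, Matrix.fromBlocks_apply₁₂, Matrix.sub_apply,
      Matrix.neg_apply, Matrix.smul_apply, smul_eq_mul, Matrix.one_apply, Matrix.trace,
      Matrix.diag, Matrix.toBlocks₁₁, Matrix.toBlocks₁₂, Matrix.toBlocks₂₁, Matrix.toBlocks₂₂,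
      Matrix.of_apply, Matrix.vecMulVec_apply, Pi.star_apply, Complex.star_def, Rmap,
      rhsFun, Sum.elim_inl, mul_ite, ite_mul, mul_one, one_mul, mul_zero, zero_mul,
      Finset.sum_ite_eq, Finset.mem_univ, if_true, sub_mul, add_mul, Finset.sum_sub_distrib]
    have e2 : (∑ t, -(x (Sum.inl s) * conj (x (Sum.inr t))) * y (Sum.inr t))
        = -(x (Sum.inl s) * ∑ t, conj (x (Sum.inr t)) * y (Sum.inr t)) := by
      rw [Finset.mul_sum, ← Finset.sum_neg_distrib]
      exact Finset.sum_congr rfl fun t _ => by ring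
    have e4 : (∑ t, x (Sum.inr s) * conj (x (Sum.inl t)) * y (Sum.inr t))
        = x (Sum.inr s) * ∑ t, conj (x (Sum.inl t)) * y (Sum.inr t) := by
      rw [Finset.mul_sum]
      exact Finset.sum_congr rfl fun t _ => by ring
    linear_combination e2 + e4
  | inr s =>
    rw [Fintype.sum_sum_type]
    simp only [Matrix.fromBlocks_apply₂₁, Matrix.fromBlocks_apply₂₂, Matrix.sub_apply,
      Matrix.neg_apply, Matrix.smul_apply, smul_eq_mul, Matrix.one_apply, Matrix.trace,
      Matrix.diag, Matrix.toBlocks₁₁, Matrix.toBlocks₁₂, Matrix.toBlocks₂₁, Matrix.toBlocks₂₂,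
      Matrix.of_apply, Matrix.vecMulVec_apply, Pi.star_apply, Complex.star_def, Rmap,
      rhsFun, Sum.elim_inr, mul_ite, ite_mul, mul_one, one_mul, mul_zero, zero_mul,
      Finset.sum_ite_eq, Finset.mem_univ, if_true, sub_mul, add_mul, Finset.sum_sub_distrib]
    have e2 : (∑ t, -(x (Sum.inr s) * conj (x (Sum.inl t))) * y (Sum.inl t))
        = -(x (Sum.inr s) * ∑ t, conj (x (Sum.inl t)) * y (Sum.inl t)) := by
      rw [Finset.mul_sum, ← Finset.sum_neg_distrib]
      exact Finset.sum_congr rfl fun t _ => by ring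
    have e4 : (∑ t, x (Sum.inl s) * conj (x (Sum.inr t)) * y (Sum.inl t))
        = x (Sum.inl s) * ∑ t, conj (x (Sum.inr t)) * y (Sum.inl t) := by
      rw [Finset.mul_sum]
      exact Finset.sum_congr rfl fun t _ => by ring
    linear_combination e2 + e4

noncomputable def Lmap (n : ℕ) :
    ((Fin n ⊕ Fin n) × (Fin n ⊕ Fin n) × (Fin n ⊕ Fin n) → ℂ) →ₗ[ℂ] ((Fin n ⊕ Fin n) → ℂ) where
  toFun Ψ := Sum.elim
    (fun s => ∑ t, (Ψ (Sum.inr t, Sum.inr t, Sum.inl s) - Ψ (Sum.inr t, Sum.inl s, Sum.inr t)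
      + Ψ (Sum.inl t, Sum.inr s, Sum.inr t) - Ψ (Sum.inl t, Sum.inr t, Sum.inr s)))
    (fun s => ∑ t, (Ψ (Sum.inl t, Sum.inl t, Sum.inr s) - Ψ (Sum.inl t, Sum.inr s, Sum.inl t)
      + Ψ (Sum.inr t, Sum.inl s, Sum.inl t) - Ψ (Sum.inr t, Sum.inl t, Sum.inl s)))
  map_add' := by
    intro Ψ Φ
    funext i
    cases i <;>
    · simp only [Pi.add_apply, Sum.elim_inl, Sum.elim_inr, ← Finset.sum_add_distrib]
      exact Finset.sum_congr rfl fun t _ => by ring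
  map_smul' := by
    intro c Ψ
    funext i
    cases i <;>
    · simp only [Pi.smul_apply, smul_eq_mul, Sum.elim_inl, Sum.elim_inr, RingHom.id_apply,
        Finset.mul_sum]
      exact Finset.sum_congr rfl fun t _ => by ring

noncomputable def gen (n : ℕ) (x y : Fin n ⊕ Fin n → ℂ) :
    (Fin n ⊕ Fin n) × (Fin n ⊕ Fin n) × (Fin n ⊕ Fin n) → ℂ :=
  fun p => conj (x p.1) * x p.2.1 * y p.2.2

lemma Lmap_gen (n : ℕ) (x y : Fin n ⊕ Fin n → ℂ) :
    Lmap n (gen n x y) = rhsFun n x y := by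
  funext i
  cases i with
  | inl s =>
    simp only [Lmap, LinearMap.coe_mk, AddHom.coe_mk, gen, rhsFun, Sum.elim_inl]
    rw [Finset.sum_mul, Finset.mul_sum, Finset.mul_sum, Finset.sum_mul,
      ← Finset.sum_sub_distrib, ← Finset.sum_sub_distrib, ← Finset.sum_add_distrib]
    exact Finset.sum_congr rfl fun t _ => by ring
  | inr s =>
    simp only [Lmap, LinearMap.coe_mk, AddHom.coe_mk, gen, rhsFun, Sum.elim_inr]
    rw [Finset.sum_mul, Finset.mul_sum, Finset.mul_sum, Finset.sum_mul,
      ← Finset.sum_sub_distrib, ← Finset.sum_sub_distrib, ← Finset.sum_add_distrib]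
    exact Finset.sum_congr rfl fun t _ => by ring

lemma ker_mem₁ (n : ℕ) (a u : Fin n → ℂ) :
    (Phi n (Matrix.vecMulVec (Sum.elim a 0) (star (Sum.elim a 0)))).mulVec (Sum.elim u 0) = 0 := by
  rw [phi_mulVec_eq]
  have : rhsFun n (Sum.elim a 0) (Sum.elim u 0) = 0 := by
    funext i
    cases i <;> simp [rhsFun]
  rw [this, smul_zero]

lemma ker_mem₂ (n : ℕ) (b v : Fin n → ℂ) :
    (Phi n (Matrix.vecMulVec (Sum.elim 0 b) (star (Sum.elim 0 b)))).mulVec (Sum.elim 0 v) = 0 := by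
  rw [phi_mulVec_eq]
  have : rhsFun n (Sum.elim 0 b) (Sum.elim 0 v) = 0 := by
    funext i
    cases i <;> simp [rhsFun]
  rw [this, smul_zero]

lemma ker_mem₃ (n : ℕ) (x : Fin n ⊕ Fin n → ℂ) :
    (Phi n (Matrix.vecMulVec x (star x))).mulVec x = 0 := by
  rw [phi_mulVec_eq]
  have : rhsFun n x x = 0 := by
    funext i
    cases i with
    | inl s =>
      simp only [rhsFun, Sum.elim_inl, Pi.zero_apply]
      have e1 : (∑ t, x (Sum.inr t) * conj (x (Sum.inr t)))
          = ∑ t, conj (x (Sum.inr t)) * x (Sum.inr t) :=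
        Finset.sum_congr rfl fun t _ => by ring
      have e2 : (∑ t, x (Sum.inr t) * conj (x (Sum.inl t)))
          = ∑ t, conj (x (Sum.inl t)) * x (Sum.inr t) :=
        Finset.sum_congr rfl fun t _ => by ring
      rw [e1, e2]
      ring
    | inr s =>
      simp only [rhsFun, Sum.elim_inr, Pi.zero_apply]
      have e1 : (∑ t, x (Sum.inl t) * conj (x (Sum.inl t)))
          = ∑ t, conj (x (Sum.inl t)) * x (Sum.inl t) :=
        Finset.sum_congr rfl fun t _ => by ring
      have e2 : (∑ t, x (Sum.inl t) * conj (x (Sum.inr t)))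
          = ∑ t, conj (x (Sum.inr t)) * x (Sum.inl t) :=
        Finset.sum_congr rfl fun t _ => by ring
      rw [e1, e2]
      ring
  rw [this, smul_zero]

lemma ker_mem₄ (n : ℕ) (a u : Fin n → ℂ) (l : ℂ) (hu : (∑ t, conj (a t) * u t) = 0) :
    (Phi n (Matrix.vecMulVec (Sum.elim a fun t => l * a t)
      (star (Sum.elim a fun t => l * a t)))).mulVec (Sum.elim u fun t => conj l * u t) = 0 := by
  rw [phi_mulVec_eq]
  have : rhsFun n (Sum.elim a fun t => l * a t) (Sum.elim u fun t => conj l * u t) = 0 := by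
    funext i
    cases i with
    | inl s =>
      simp only [rhsFun, Sum.elim_inl, Sum.elim_inr, Pi.zero_apply, map_mul]
      have c1 : (∑ t, l * a t * (conj l * conj (a t)))
          = l * conj l * ∑ t, conj (a t) * a t := by
        rw [Finset.mul_sum]; exact Finset.sum_congr rfl fun t _ => by ring
      have c2 : (∑ t, conj l * conj (a t) * (conj l * u t))
          = conj l * conj l * ∑ t, conj (a t) * u t := by
        rw [Finset.mul_sum]; exact Finset.sum_congr rfl fun t _ => by ring
      have c3 : (∑ t, l * a t * conj (a t))
          = l * ∑ t, conj (a t) * a t := by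
        rw [Finset.mul_sum]; exact Finset.sum_congr rfl fun t _ => by ring
      have c4 : (∑ t, conj (a t) * (conj l * u t))
          = conj l * ∑ t, conj (a t) * u t := by
        rw [Finset.mul_sum]; exact Finset.sum_congr rfl fun t _ => by ring
      rw [c1, c2, c3, c4, hu]
      ring
    | inr s =>
      simp only [rhsFun, Sum.elim_inl, Sum.elim_inr, Pi.zero_apply, map_mul]
      have c5 : (∑ t, a t * conj (a t)) = ∑ t, conj (a t) * a t :=
        Finset.sum_congr rfl fun t _ => by ring
      have c6 : (∑ t, a t * (conj l * conj (a t)))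
          = conj l * ∑ t, conj (a t) * a t := by
        rw [Finset.mul_sum]; exact Finset.sum_congr rfl fun t _ => by ring
      have c7 : (∑ t, conj l * conj (a t) * u t)
          = conj l * ∑ t, conj (a t) * u t := by
        rw [Finset.mul_sum]; exact Finset.sum_congr rfl fun t _ => by ring
      rw [c5, c6, c7, hu]
      ring
  rw [this, smul_zero]

lemma tri_addT {ι : Type*} [Fintype ι] (T T' : ι → ι → ι → ℂ) (x y z : ι → ℂ) :
    tri (fun i j k => T i j k + T' i j k) x y z = tri T x y z + tri T' x y z := by
  simp only [tri, ← Finset.sum_add_distrib]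
  refine Finset.sum_congr rfl fun i _ => Finset.sum_congr rfl fun j _ =>
    Finset.sum_congr rfl fun k _ => by ring

lemma split3 {n : ℕ} (f : (Fin n ⊕ Fin n) → (Fin n ⊕ Fin n) → (Fin n ⊕ Fin n) → ℂ)
    (x y z : Fin n ⊕ Fin n → ℂ) :
    (∑ i, ∑ j, ∑ k, x i * y j * z k * f i j k)
    = tri (fun a b c => f (Sum.inl a) (Sum.inl b) (Sum.inl c))
        (fun t => x (Sum.inl t)) (fun t => y (Sum.inl t)) (fun t => z (Sum.inl t))
    + tri (fun a b c => f (Sum.inl a) (Sum.inl b) (Sum.inr c))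
        (fun t => x (Sum.inl t)) (fun t => y (Sum.inl t)) (fun t => z (Sum.inr t))
    + tri (fun a b c => f (Sum.inl a) (Sum.inr b) (Sum.inl c))
        (fun t => x (Sum.inl t)) (fun t => y (Sum.inr t)) (fun t => z (Sum.inl t))
    + tri (fun a b c => f (Sum.inl a) (Sum.inr b) (Sum.inr c))
        (fun t => x (Sum.inl t)) (fun t => y (Sum.inr t)) (fun t => z (Sum.inr t))
    + tri (fun a b c => f (Sum.inr a) (Sum.inl b) (Sum.inl c))
        (fun t => x (Sum.inr t)) (fun t => y (Sum.inl t)) (fun t => z (Sum.inl t))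
    + tri (fun a b c => f (Sum.inr a) (Sum.inl b) (Sum.inr c))
        (fun t => x (Sum.inr t)) (fun t => y (Sum.inl t)) (fun t => z (Sum.inr t))
    + tri (fun a b c => f (Sum.inr a) (Sum.inr b) (Sum.inl c))
        (fun t => x (Sum.inr t)) (fun t => y (Sum.inr t)) (fun t => z (Sum.inl t))
    + tri (fun a b c => f (Sum.inr a) (Sum.inr b) (Sum.inr c))
        (fun t => x (Sum.inr t)) (fun t => y (Sum.inr t)) (fun t => z (Sum.inr t)) := by
  simp only [Fintype.sum_sum_type, Finset.sum_add_distrib, tri]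
  ring

lemma Lmap_surj (n : ℕ) (hn : 0 < n) : Function.Surjective (Lmap n) := by
  classical
  intro z
  refine ⟨fun p =>
    match p with
    | (Sum.inr t, Sum.inr t', Sum.inl s) => if t = ⟨0, hn⟩ ∧ t' = ⟨0, hn⟩ then z (Sum.inl s) else 0
    | (Sum.inl t, Sum.inl t', Sum.inr s) => if t = ⟨0, hn⟩ ∧ t' = ⟨0, hn⟩ then z (Sum.inr s) else 0
    | _ => 0, ?_⟩
  funext i
  cases i with
  | inl s =>
    simp only [Lmap, LinearMap.coe_mk, AddHom.coe_mk, Sum.elim_inl]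
    simp [and_self, Finset.sum_ite_eq', Finset.mem_univ]
  | inr s =>
    simp only [Lmap, LinearMap.coe_mk, AddHom.coe_mk, Sum.elim_inr]
    simp [and_self, Finset.sum_ite_eq', Finset.mem_univ]

lemma key (n : ℕ) (hn : 2 ≤ n)
    (F : ((Fin n ⊕ Fin n) × (Fin n ⊕ Fin n) × (Fin n ⊕ Fin n) → ℂ) →ₗ[ℂ] ℂ)
    (hF : ∀ x y : Fin n ⊕ Fin n → ℂ,
      (Phi n (Matrix.vecMulVec x (star x))).mulVec y = 0 → F (gen n x y) = 0)
    (Ψ : (Fin n ⊕ Fin n) × (Fin n ⊕ Fin n) × (Fin n ⊕ Fin n) → ℂ)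
    (hΨ : Lmap n Ψ = 0) : F Ψ = 0 := by
  classical
  have hp0lt : 0 < n := by omega
  set g : (Fin n ⊕ Fin n) → (Fin n ⊕ Fin n) → (Fin n ⊕ Fin n) → ℂ :=
    fun i j k => F (Pi.single (i, j, k) 1) with hgdef
  have hexp : ∀ Φ : (Fin n ⊕ Fin n) × (Fin n ⊕ Fin n) × (Fin n ⊕ Fin n) → ℂ,
      F Φ = ∑ i, ∑ j, ∑ k, Φ (i, j, k) * g i j k := by
    intro Φ
    conv_lhs => rw [← Finset.univ_sum_single Φ]
    rw [map_sum]
    have e1 : ∀ p : (Fin n ⊕ Fin n) × (Fin n ⊕ Fin n) × (Fin n ⊕ Fin n),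
        F (Pi.single p (Φ p)) = Φ p * g p.1 p.2.1 p.2.2 := by
      intro p
      have h1 : Pi.single p (Φ p) = Φ p • (Pi.single p 1
          : (Fin n ⊕ Fin n) × (Fin n ⊕ Fin n) × (Fin n ⊕ Fin n) → ℂ) := by
        rw [← Pi.single_smul, smul_eq_mul, mul_one]
      rw [h1, map_smul, smul_eq_mul]
    rw [Finset.sum_congr rfl fun p _ => e1 p, Fintype.sum_prod_type]
    exact Finset.sum_congr rfl fun i _ => by rw [Fintype.sum_prod_type]
  have hgen : ∀ x y : Fin n ⊕ Fin n → ℂ,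
      (Phi n (Matrix.vecMulVec x (star x))).mulVec y = 0 →
      (∑ i, ∑ j, ∑ k, conj (x i) * x j * y k * g i j k) = 0 := by
    intro x y h
    have h0 := hF x y h
    rw [hexp] at h0
    simpa [gen] using h0
  -- block (1,1,1) vanishes
  have D1 : ∀ i j k, g (Sum.inl i) (Sum.inl j) (Sum.inl k) = 0 := by
    have hk : ∀ (k0 : Fin n) (a : Fin n → ℂ),
        bil (fun i j => g (Sum.inl i) (Sum.inl j) (Sum.inl k0)) (fun i => conj (a i)) a = 0 := by
      intro k0 a
      have h0 := hgen (Sum.elim a 0) (Sum.elim (Pi.single k0 1) 0) (ker_mem₁ n a _)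
      simp only [Fintype.sum_sum_type, Sum.elim_inl, Sum.elim_inr, Pi.zero_apply, map_zero,
        zero_mul, mul_zero, Finset.sum_const_zero, add_zero, zero_add] at h0
      simp only [bil]
      rw [← h0]
      refine Finset.sum_congr rfl fun i _ => Finset.sum_congr rfl fun j _ => ?_
      symm
      simp [Pi.single_apply, mul_ite, ite_mul, mul_one, mul_zero, zero_mul, one_mul,
        Finset.sum_ite_eq', Finset.mem_univ]
    intro i j k
    exact sesq _ (hk k) i j
  -- block (2,2,2) vanishes
  have D2 : ∀ i j k, g (Sum.inr i) (Sum.inr j) (Sum.inr k) = 0 := by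
    have hk : ∀ (k0 : Fin n) (b : Fin n → ℂ),
        bil (fun i j => g (Sum.inr i) (Sum.inr j) (Sum.inr k0)) (fun i => conj (b i)) b = 0 := by
      intro k0 b
      have h0 := hgen (Sum.elim 0 b) (Sum.elim 0 (Pi.single k0 1)) (ker_mem₂ n b _)
      simp only [Fintype.sum_sum_type, Sum.elim_inl, Sum.elim_inr, Pi.zero_apply, map_zero,
        zero_mul, mul_zero, Finset.sum_const_zero, add_zero, zero_add] at h0
      simp only [bil]
      rw [← h0]
      refine Finset.sum_congr rfl fun i _ => Finset.sum_congr rfl fun j _ => ?_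
      symm
      simp [Pi.single_apply, mul_ite, ite_mul, mul_one, mul_zero, zero_mul, one_mul,
        Finset.sum_ite_eq', Finset.mem_univ]
    intro i j k
    exact sesq _ (hk k) i j
  -- antisymmetry in the last two slots
  have D3 : ∀ i j k, g i j k + g i k j = 0 := by
    refine cubic21 g fun x => ?_
    have h0 := hgen x x (ker_mem₃ n x)
    simpa only [tri] using h0
  -- the (a, λ a) family
  have hC : ∀ (a u : Fin n → ℂ), (∑ r, conj (a r) * u r) = 0 →
      (tri (fun t t' k => g (Sum.inl t) (Sum.inr t') (Sum.inl k)) (fun t => conj (a t)) a u = 0) ∧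
      (tri (fun t t' k => g (Sum.inl t) (Sum.inl t') (Sum.inr k)
          + g (Sum.inr t) (Sum.inl t') (Sum.inl k)) (fun t => conj (a t)) a u = 0) ∧
      (tri (fun t t' k => g (Sum.inl t) (Sum.inr t') (Sum.inr k)
          + g (Sum.inr t) (Sum.inr t') (Sum.inl k)) (fun t => conj (a t)) a u = 0) ∧
      (tri (fun t t' k => g (Sum.inr t) (Sum.inl t') (Sum.inr k)) (fun t => conj (a t)) a u = 0)
      := by
    intro a u hu
    have hl : ∀ l : ℂ,
        (tri (fun t t' k => g (Sum.inl t) (Sum.inr t') (Sum.inl k)) (fun t => conj (a t)) a u) * l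
        + (tri (fun t t' k => g (Sum.inl t) (Sum.inl t') (Sum.inr k)) (fun t => conj (a t)) a u
          + tri (fun t t' k => g (Sum.inr t) (Sum.inl t') (Sum.inl k)) (fun t => conj (a t)) a u)
            * conj l
        + 0 * l ^ 2
        + (tri (fun t t' k => g (Sum.inr t) (Sum.inl t') (Sum.inr k)) (fun t => conj (a t)) a u)
            * (conj l) ^ 2
        + (tri (fun t t' k => g (Sum.inl t) (Sum.inr t') (Sum.inr k)) (fun t => conj (a t)) a u
          + tri (fun t t' k => g (Sum.inr t) (Sum.inr t') (Sum.inl k)) (fun t => conj (a t)) a u)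
            * (l * conj l) = 0 := by
      intro l
      have h0 := hgen (Sum.elim a fun t => l * a t) (Sum.elim u fun t => conj l * u t)
        (ker_mem₄ n a u l hu)
      rw [split3] at h0
      simp only [Sum.elim_inl, Sum.elim_inr, map_mul] at h0
      rw [tri_zero _ D1, tri_zero _ D2] at h0
      rw [show (fun t => conj l * conj (a t)) = fun t => conj l * (fun r => conj (a r)) t from rfl]
        at h0
      rw [tri_smul₃, tri_smul₂, tri_smul₂, tri_smul₃, tri_smul₁, tri_smul₁, tri_smul₃,
        tri_smul₁, tri_smul₂] at h0
      linear_combination h0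
    obtain ⟨f1, f2, f3, f4, f5⟩ := five_coeffs
      (tri (fun t t' k => g (Sum.inl t) (Sum.inr t') (Sum.inl k)) (fun t => conj (a t)) a u)
      (tri (fun t t' k => g (Sum.inl t) (Sum.inl t') (Sum.inr k)) (fun t => conj (a t)) a u
        + tri (fun t t' k => g (Sum.inr t) (Sum.inl t') (Sum.inl k)) (fun t => conj (a t)) a u)
      0
      (tri (fun t t' k => g (Sum.inr t) (Sum.inl t') (Sum.inr k)) (fun t => conj (a t)) a u)
      (tri (fun t t' k => g (Sum.inl t) (Sum.inr t') (Sum.inr k)) (fun t => conj (a t)) a u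
        + tri (fun t t' k => g (Sum.inr t) (Sum.inr t') (Sum.inl k)) (fun t => conj (a t)) a u)
      (fun l => by linear_combination hl l)
    refine ⟨f1, ?_, ?_, f4⟩
    · rw [tri_addT]; exact f2
    · rw [tri_addT]; exact f5
  -- pipeline applications
  have P121 := pipeline hn (fun t t' k => g (Sum.inl t) (Sum.inr t') (Sum.inl k))
      (fun a u hu => (hC a u hu).1)
  have PC1 := pipeline hn (fun t t' k => g (Sum.inl t) (Sum.inl t') (Sum.inr k)
      + g (Sum.inr t) (Sum.inl t') (Sum.inl k)) (fun a u hu => (hC a u hu).2.1)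
  have PC3 := pipeline hn (fun t t' k => g (Sum.inl t) (Sum.inr t') (Sum.inr k)
      + g (Sum.inr t) (Sum.inr t') (Sum.inl k)) (fun a u hu => (hC a u hu).2.2.1)
  have P212 := pipeline hn (fun t t' k => g (Sum.inr t) (Sum.inl t') (Sum.inr k))
      (fun a u hu => (hC a u hu).2.2.2)
  set p0 : Fin n := ⟨0, by omega⟩ with hp0def
  set p1 : Fin n := ⟨1, by omega⟩ with hp1def
  have hp01 : p1 ≠ p0 := by simp [hp0def, hp1def, Fin.ext_iff]
  set gam : Fin n → ℂ := fun j => g (Sum.inl p0) (Sum.inr j) (Sum.inl p0) with hgamdef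
  set bet : Fin n → ℂ := fun j => g (Sum.inr p0) (Sum.inl j) (Sum.inr p0) with hbetdef
  set m1 : Fin n → ℂ := fun j =>
    g (Sum.inl p0) (Sum.inl j) (Sum.inr p0) + g (Sum.inr p0) (Sum.inl j) (Sum.inl p0) with hm1def
  set m3 : Fin n → ℂ := fun j =>
    g (Sum.inl p0) (Sum.inr j) (Sum.inr p0) + g (Sum.inr p0) (Sum.inr j) (Sum.inl p0) with hm3def
  have tb121 : ∀ t t' k, g (Sum.inl t) (Sum.inr t') (Sum.inl k)
      = if t = k then gam t' else 0 := fun t t' k => P121 t t' k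
  have tb212 : ∀ t t' k, g (Sum.inr t) (Sum.inl t') (Sum.inr k)
      = if t = k then bet t' else 0 := fun t t' k => P212 t t' k
  have X1eq : ∀ t t' k, g (Sum.inl t) (Sum.inl t') (Sum.inr k)
      + g (Sum.inr t) (Sum.inl t') (Sum.inl k) = if t = k then m1 t' else 0 :=
    fun t t' k => PC1 t t' k
  have X3eq : ∀ t t' k, g (Sum.inl t) (Sum.inr t') (Sum.inr k)
      + g (Sum.inr t) (Sum.inr t') (Sum.inl k) = if t = k then m3 t' else 0 :=
    fun t t' k => PC3 t t' k
  have tb112 : ∀ i j k, g (Sum.inl i) (Sum.inl j) (Sum.inr k)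
      = -(if i = j then gam k else 0) := by
    intro i j k
    have h0 := D3 (Sum.inl i) (Sum.inl j) (Sum.inr k)
    rw [tb121 i k j] at h0
    linear_combination h0
  have tb221 : ∀ i j k, g (Sum.inr i) (Sum.inr j) (Sum.inl k)
      = -(if i = j then bet k else 0) := by
    intro i j k
    have h0 := D3 (Sum.inr i) (Sum.inr j) (Sum.inl k)
    rw [tb212 i k j] at h0
    linear_combination h0
  have tb211' : ∀ i j k, g (Sum.inr i) (Sum.inl j) (Sum.inl k)
      = (if i = k then m1 j else 0) + (if i = j then gam k else 0) := by
    intro i j k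
    have h0 := X1eq i j k
    rw [tb112 i j k] at h0
    linear_combination h0
  have tb122' : ∀ i j k, g (Sum.inl i) (Sum.inr j) (Sum.inr k)
      = (if i = k then m3 j else 0) + (if i = j then bet k else 0) := by
    intro i j k
    have h0 := X3eq i j k
    rw [tb221 i j k] at h0
    linear_combination h0
  have hm1 : ∀ j, m1 j = - gam j := by
    intro j
    have hij : (if j = p0 then p1 else p0) ≠ j := by
      split_ifs with h
      · rw [h]; exact hp01
      · exact fun hh => h hh.symm
    have hD := D3 (Sum.inr (if j = p0 then p1 else p0)) (Sum.inl j)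
      (Sum.inl (if j = p0 then p1 else p0))
    rw [tb211' _ j _, tb211' _ _ j] at hD
    simp only [eq_self_iff_true, if_true, if_neg hij] at hD
    linear_combination hD
  have hm3 : ∀ j, m3 j = - bet j := by
    intro j
    have hij : (if j = p0 then p1 else p0) ≠ j := by
      split_ifs with h
      · rw [h]; exact hp01
      · exact fun hh => h hh.symm
    have hD := D3 (Sum.inl (if j = p0 then p1 else p0)) (Sum.inr j)
      (Sum.inr (if j = p0 then p1 else p0))
    rw [tb122' _ j _, tb122' _ _ j] at hD
    simp only [eq_self_iff_true, if_true, if_neg hij] at hD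
    linear_combination hD
  have tb211 : ∀ i j k, g (Sum.inr i) (Sum.inl j) (Sum.inl k)
      = -(if i = k then gam j else 0) + (if i = j then gam k else 0) := by
    intro i j k
    rw [tb211' i j k, hm1 j]
    split_ifs <;> ring
  have tb122 : ∀ i j k, g (Sum.inl i) (Sum.inr j) (Sum.inr k)
      = -(if i = k then bet j else 0) + (if i = j then bet k else 0) := by
    intro i j k
    rw [tb122' i j k, hm3 j]
    split_ifs <;> ring
  -- components of the kernel condition
  have hL1 : ∀ s : Fin n, (∑ t, (Ψ (Sum.inr t, Sum.inr t, Sum.inl s)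
      - Ψ (Sum.inr t, Sum.inl s, Sum.inr t) + Ψ (Sum.inl t, Sum.inr s, Sum.inr t)
      - Ψ (Sum.inl t, Sum.inr t, Sum.inr s))) = 0 := by
    intro s
    have h0 := congrFun hΨ (Sum.inl s)
    simpa [Lmap] using h0
  have hL2 : ∀ s : Fin n, (∑ t, (Ψ (Sum.inl t, Sum.inl t, Sum.inr s)
      - Ψ (Sum.inl t, Sum.inr s, Sum.inl t) + Ψ (Sum.inr t, Sum.inl s, Sum.inl t)
      - Ψ (Sum.inr t, Sum.inl t, Sum.inl s))) = 0 := by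
    intro s
    have h0 := congrFun hΨ (Sum.inr s)
    simpa [Lmap] using h0
  -- block collapses
  have B111 : (∑ a, ∑ b, ∑ c, Ψ (Sum.inl a, Sum.inl b, Sum.inl c)
      * g (Sum.inl a) (Sum.inl b) (Sum.inl c)) = 0 := by
    refine Finset.sum_eq_zero fun a _ => Finset.sum_eq_zero fun b _ =>
      Finset.sum_eq_zero fun c _ => ?_
    rw [D1]; ring
  have B222 : (∑ a, ∑ b, ∑ c, Ψ (Sum.inr a, Sum.inr b, Sum.inr c)
      * g (Sum.inr a) (Sum.inr b) (Sum.inr c)) = 0 := by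
    refine Finset.sum_eq_zero fun a _ => Finset.sum_eq_zero fun b _ =>
      Finset.sum_eq_zero fun c _ => ?_
    rw [D2]; ring
  have B112 : (∑ a, ∑ b, ∑ c, Ψ (Sum.inl a, Sum.inl b, Sum.inr c)
      * g (Sum.inl a) (Sum.inl b) (Sum.inr c))
      = ∑ a, ∑ c, -(Ψ (Sum.inl a, Sum.inl a, Sum.inr c) * gam c) := by
    refine Finset.sum_congr rfl fun a _ => ?_
    calc (∑ b, ∑ c, Ψ (Sum.inl a, Sum.inl b, Sum.inr c) * g (Sum.inl a) (Sum.inl b) (Sum.inr c))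
        = ∑ b, (if a = b then ∑ c, -(Ψ (Sum.inl a, Sum.inl b, Sum.inr c) * gam c) else 0) := by
          refine Finset.sum_congr rfl fun b _ => ?_
          by_cases hab : a = b
          · rw [if_pos hab]
            exact Finset.sum_congr rfl fun c _ => by rw [tb112, if_pos hab]; ring
          · rw [if_neg hab]
            exact Finset.sum_eq_zero fun c _ => by rw [tb112, if_neg hab]; ring
      _ = ∑ c, -(Ψ (Sum.inl a, Sum.inl a, Sum.inr c) * gam c) := by
          rw [Finset.sum_ite_eq]; simp
  have B221 : (∑ a, ∑ b, ∑ c, Ψ (Sum.inr a, Sum.inr b, Sum.inl c)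
      * g (Sum.inr a) (Sum.inr b) (Sum.inl c))
      = ∑ a, ∑ c, -(Ψ (Sum.inr a, Sum.inr a, Sum.inl c) * bet c) := by
    refine Finset.sum_congr rfl fun a _ => ?_
    calc (∑ b, ∑ c, Ψ (Sum.inr a, Sum.inr b, Sum.inl c) * g (Sum.inr a) (Sum.inr b) (Sum.inl c))
        = ∑ b, (if a = b then ∑ c, -(Ψ (Sum.inr a, Sum.inr b, Sum.inl c) * bet c) else 0) := by
          refine Finset.sum_congr rfl fun b _ => ?_
          by_cases hab : a = b
          · rw [if_pos hab]
            exact Finset.sum_congr rfl fun c _ => by rw [tb221, if_pos hab]; ring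
          · rw [if_neg hab]
            exact Finset.sum_eq_zero fun c _ => by rw [tb221, if_neg hab]; ring
      _ = ∑ c, -(Ψ (Sum.inr a, Sum.inr a, Sum.inl c) * bet c) := by
          rw [Finset.sum_ite_eq]; simp
  have B121 : (∑ a, ∑ b, ∑ c, Ψ (Sum.inl a, Sum.inr b, Sum.inl c)
      * g (Sum.inl a) (Sum.inr b) (Sum.inl c))
      = ∑ a, ∑ b, Ψ (Sum.inl a, Sum.inr b, Sum.inl a) * gam b := by
    refine Finset.sum_congr rfl fun a _ => Finset.sum_congr rfl fun b _ => ?_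
    calc (∑ c, Ψ (Sum.inl a, Sum.inr b, Sum.inl c) * g (Sum.inl a) (Sum.inr b) (Sum.inl c))
        = ∑ c, (if a = c then Ψ (Sum.inl a, Sum.inr b, Sum.inl c) * gam b else 0) := by
          refine Finset.sum_congr rfl fun c _ => ?_
          by_cases hac : a = c
          · rw [tb121, if_pos hac, if_pos hac]
          · rw [tb121, if_neg hac, if_neg hac]; ring
      _ = Ψ (Sum.inl a, Sum.inr b, Sum.inl a) * gam b := by rw [Finset.sum_ite_eq]; simp
  have B212 : (∑ a, ∑ b, ∑ c, Ψ (Sum.inr a, Sum.inl b, Sum.inr c)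
      * g (Sum.inr a) (Sum.inl b) (Sum.inr c))
      = ∑ a, ∑ b, Ψ (Sum.inr a, Sum.inl b, Sum.inr a) * bet b := by
    refine Finset.sum_congr rfl fun a _ => Finset.sum_congr rfl fun b _ => ?_
    calc (∑ c, Ψ (Sum.inr a, Sum.inl b, Sum.inr c) * g (Sum.inr a) (Sum.inl b) (Sum.inr c))
        = ∑ c, (if a = c then Ψ (Sum.inr a, Sum.inl b, Sum.inr c) * bet b else 0) := by
          refine Finset.sum_congr rfl fun c _ => ?_
          by_cases hac : a = c
          · rw [tb212, if_pos hac, if_pos hac]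
          · rw [tb212, if_neg hac, if_neg hac]; ring
      _ = Ψ (Sum.inr a, Sum.inl b, Sum.inr a) * bet b := by rw [Finset.sum_ite_eq]; simp
  have B122 : (∑ a, ∑ b, ∑ c, Ψ (Sum.inl a, Sum.inr b, Sum.inr c)
      * g (Sum.inl a) (Sum.inr b) (Sum.inr c))
      = (∑ a, ∑ b, -(Ψ (Sum.inl a, Sum.inr b, Sum.inr a) * bet b))
        + (∑ a, ∑ c, Ψ (Sum.inl a, Sum.inr a, Sum.inr c) * bet c) := by
    rw [← Finset.sum_add_distrib]
    refine Finset.sum_congr rfl fun a _ => ?_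
    calc (∑ b, ∑ c, Ψ (Sum.inl a, Sum.inr b, Sum.inr c) * g (Sum.inl a) (Sum.inr b) (Sum.inr c))
        = ∑ b, ∑ c, ((if a = c then -(Ψ (Sum.inl a, Sum.inr b, Sum.inr c) * bet b) else 0)
            + (if a = b then Ψ (Sum.inl a, Sum.inr b, Sum.inr c) * bet c else 0)) := by
          refine Finset.sum_congr rfl fun b _ => Finset.sum_congr rfl fun c _ => ?_
          rw [tb122]
          split_ifs <;> ring
      _ = (∑ b, -(Ψ (Sum.inl a, Sum.inr b, Sum.inr a) * bet b))
          + (∑ c, Ψ (Sum.inl a, Sum.inr a, Sum.inr c) * bet c) := by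
          simp only [Finset.sum_add_distrib]
          congr 1
          · refine Finset.sum_congr rfl fun b _ => ?_
            rw [Finset.sum_ite_eq]; simp
          · rw [Finset.sum_comm]
            refine Finset.sum_congr rfl fun c _ => ?_
            rw [Finset.sum_ite_eq]; simp
  have B211 : (∑ a, ∑ b, ∑ c, Ψ (Sum.inr a, Sum.inl b, Sum.inl c)
      * g (Sum.inr a) (Sum.inl b) (Sum.inl c))
      = (∑ a, ∑ b, -(Ψ (Sum.inr a, Sum.inl b, Sum.inl a) * gam b))
        + (∑ a, ∑ c, Ψ (Sum.inr a, Sum.inl a, Sum.inl c) * gam c) := by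
    rw [← Finset.sum_add_distrib]
    refine Finset.sum_congr rfl fun a _ => ?_
    calc (∑ b, ∑ c, Ψ (Sum.inr a, Sum.inl b, Sum.inl c) * g (Sum.inr a) (Sum.inl b) (Sum.inl c))
        = ∑ b, ∑ c, ((if a = c then -(Ψ (Sum.inr a, Sum.inl b, Sum.inl c) * gam b) else 0)
            + (if a = b then Ψ (Sum.inr a, Sum.inl b, Sum.inl c) * gam c else 0)) := by
          refine Finset.sum_congr rfl fun b _ => Finset.sum_congr rfl fun c _ => ?_
          rw [tb211]
          split_ifs <;> ring
      _ = (∑ b, -(Ψ (Sum.inr a, Sum.inl b, Sum.inl a) * gam b))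
          + (∑ c, Ψ (Sum.inr a, Sum.inl a, Sum.inl c) * gam c) := by
          simp only [Finset.sum_add_distrib]
          congr 1
          · refine Finset.sum_congr rfl fun b _ => ?_
            rw [Finset.sum_ite_eq]; simp
          · rw [Finset.sum_comm]
            refine Finset.sum_congr rfl fun c _ => ?_
            rw [Finset.sum_ite_eq]; simp
  -- global relations from the kernel condition
  have key1 : (∑ s, ∑ t, (-(bet s)) * (Ψ (Sum.inr t, Sum.inr t, Sum.inl s)
      - Ψ (Sum.inr t, Sum.inl s, Sum.inr t) + Ψ (Sum.inl t, Sum.inr s, Sum.inr t)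
      - Ψ (Sum.inl t, Sum.inr t, Sum.inr s))) = 0 := by
    refine Finset.sum_eq_zero fun s _ => ?_
    rw [← Finset.mul_sum, hL1 s, mul_zero]
  have key2 : (∑ s, ∑ t, (-(gam s)) * (Ψ (Sum.inl t, Sum.inl t, Sum.inr s)
      - Ψ (Sum.inl t, Sum.inr s, Sum.inl t) + Ψ (Sum.inr t, Sum.inl s, Sum.inl t)
      - Ψ (Sum.inr t, Sum.inl t, Sum.inl s))) = 0 := by
    refine Finset.sum_eq_zero fun s _ => ?_
    rw [← Finset.mul_sum, hL2 s, mul_zero]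
  have key1' : (∑ a, ∑ c, -(Ψ (Sum.inr a, Sum.inr a, Sum.inl c) * bet c))
      + (∑ a, ∑ b, Ψ (Sum.inr a, Sum.inl b, Sum.inr a) * bet b)
      + (∑ a, ∑ b, -(Ψ (Sum.inl a, Sum.inr b, Sum.inr a) * bet b))
      + (∑ a, ∑ c, Ψ (Sum.inl a, Sum.inr a, Sum.inr c) * bet c) = 0 := by
    calc (∑ a, ∑ c, -(Ψ (Sum.inr a, Sum.inr a, Sum.inl c) * bet c))
        + (∑ a, ∑ b, Ψ (Sum.inr a, Sum.inl b, Sum.inr a) * bet b)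
        + (∑ a, ∑ b, -(Ψ (Sum.inl a, Sum.inr b, Sum.inr a) * bet b))
        + (∑ a, ∑ c, Ψ (Sum.inl a, Sum.inr a, Sum.inr c) * bet c)
        = ∑ t, ∑ s, (-(bet s)) * (Ψ (Sum.inr t, Sum.inr t, Sum.inl s)
          - Ψ (Sum.inr t, Sum.inl s, Sum.inr t) + Ψ (Sum.inl t, Sum.inr s, Sum.inr t)
          - Ψ (Sum.inl t, Sum.inr t, Sum.inr s)) := by
          rw [← Finset.sum_add_distrib, ← Finset.sum_add_distrib, ← Finset.sum_add_distrib]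
          refine Finset.sum_congr rfl fun t _ => ?_
          rw [← Finset.sum_add_distrib, ← Finset.sum_add_distrib, ← Finset.sum_add_distrib]
          exact Finset.sum_congr rfl fun s _ => by ring
      _ = 0 := by rw [Finset.sum_comm]; exact key1
  have key2' : (∑ a, ∑ c, -(Ψ (Sum.inl a, Sum.inl a, Sum.inr c) * gam c))
      + (∑ a, ∑ b, Ψ (Sum.inl a, Sum.inr b, Sum.inl a) * gam b)
      + (∑ a, ∑ b, -(Ψ (Sum.inr a, Sum.inl b, Sum.inl a) * gam b))
      + (∑ a, ∑ c, Ψ (Sum.inr a, Sum.inl a, Sum.inl c) * gam c) = 0 := by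
    calc (∑ a, ∑ c, -(Ψ (Sum.inl a, Sum.inl a, Sum.inr c) * gam c))
        + (∑ a, ∑ b, Ψ (Sum.inl a, Sum.inr b, Sum.inl a) * gam b)
        + (∑ a, ∑ b, -(Ψ (Sum.inr a, Sum.inl b, Sum.inl a) * gam b))
        + (∑ a, ∑ c, Ψ (Sum.inr a, Sum.inl a, Sum.inl c) * gam c)
        = ∑ t, ∑ s, (-(gam s)) * (Ψ (Sum.inl t, Sum.inl t, Sum.inr s)
          - Ψ (Sum.inl t, Sum.inr s, Sum.inl t) + Ψ (Sum.inr t, Sum.inl s, Sum.inl t)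
          - Ψ (Sum.inr t, Sum.inl t, Sum.inl s)) := by
          rw [← Finset.sum_add_distrib, ← Finset.sum_add_distrib, ← Finset.sum_add_distrib]
          refine Finset.sum_congr rfl fun t _ => ?_
          rw [← Finset.sum_add_distrib, ← Finset.sum_add_distrib, ← Finset.sum_add_distrib]
          exact Finset.sum_congr rfl fun s _ => by ring
      _ = 0 := by rw [Finset.sum_comm]; exact key2
  -- conclusion
  rw [hexp Ψ]
  simp only [Fintype.sum_sum_type, Finset.sum_add_distrib]
  rw [B111, B112, B121, B122, B211, B212, B221, B222]
  linear_combination key1' + key2'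

/-- Strong spanning property of `Φ_n`: the subspace
`N = span{ x̄ ⊗ x ⊗ y : Φ_n(|x⟩⟨x|) y = 0 } ⊂ (ℂ^{2n})^{⊗3}` has dimension
`2n(4n² − 1) = ((2n)² − 1)·(2n)`. -/
theorem dim_N (n : ℕ) (hn : 2 ≤ n) :
    Module.finrank ℂ
      ↥(Submodule.span ℂ
        {Ψ : (Fin n ⊕ Fin n) × (Fin n ⊕ Fin n) × (Fin n ⊕ Fin n) → ℂ |
          ∃ x y : Fin n ⊕ Fin n → ℂ,
            (Phi n (Matrix.vecMulVec x (star x))).mulVec y = 0 ∧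
            Ψ = fun p => conj (x p.1) * x p.2.1 * y p.2.2}) =
      2 * n * (4 * n ^ 2 - 1) := by
  classical
  have hspan : Submodule.span ℂ
      {Ψ : (Fin n ⊕ Fin n) × (Fin n ⊕ Fin n) × (Fin n ⊕ Fin n) → ℂ |
        ∃ x y : Fin n ⊕ Fin n → ℂ,
          (Phi n (Matrix.vecMulVec x (star x))).mulVec y = 0 ∧
          Ψ = fun p => conj (x p.1) * x p.2.1 * y p.2.2}
      = LinearMap.ker (Lmap n) := by
    apply le_antisymm
    · rw [Submodule.span_le]
      rintro Ψ ⟨x, y, hker, rfl⟩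
      simp only [SetLike.mem_coe, LinearMap.mem_ker]
      have h1 : (fun p : (Fin n ⊕ Fin n) × (Fin n ⊕ Fin n) × (Fin n ⊕ Fin n) =>
          conj (x p.1) * x p.2.1 * y p.2.2) = gen n x y := rfl
      rw [h1, Lmap_gen]
      have h2 := phi_mulVec_eq n x y
      rw [hker] at h2
      have hn0 : ((n : ℂ))⁻¹ ≠ 0 := by
        simp only [ne_eq, inv_eq_zero, Nat.cast_eq_zero]
        omega
      exact ((smul_eq_zero.mp h2.symm).resolve_left hn0)
    · rw [← Subspace.dualAnnihilator_le_dualAnnihilator_iff]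
      intro F hF
      rw [Submodule.mem_dualAnnihilator] at hF ⊢
      intro Ψ hΨ
      rw [LinearMap.mem_ker] at hΨ
      refine key n hn F ?_ Ψ hΨ
      intro x y hxy
      exact hF (gen n x y) (Submodule.subset_span ⟨x, y, hxy, rfl⟩)
  rw [hspan]
  have hrank := LinearMap.finrank_range_add_finrank_ker (Lmap n)
  have hsurj : LinearMap.range (Lmap n) = ⊤ :=
    LinearMap.range_eq_top.mpr (Lmap_surj n (by omega))
  rw [hsurj, finrank_top] at hrank
  rw [Module.finrank_fintype_fun_eq_card, Module.finrank_fintype_fun_eq_card] at hrank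
  have hcard1 : Fintype.card (Fin n ⊕ Fin n) = 2 * n := by
    simp [Fintype.card_sum, two_mul]
  have hcard2 : Fintype.card
      ((Fin n ⊕ Fin n) × (Fin n ⊕ Fin n) × (Fin n ⊕ Fin n)) = 2 * n * (4 * n ^ 2) := by
    simp [Fintype.card_prod, Fintype.card_sum]
    ring
  rw [hcard1, hcard2] at hrank
  have h1 : Module.finrank ℂ ↥(LinearMap.ker (Lmap n)) = 2 * n * (4 * n ^ 2) - 2 * n := by
    omega
  rw [h1, Nat.mul_sub, mul_one]
end
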